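/- arXiv:2502.16382 — 5 statements merged into one kernel-verified Lean document; each statement's English description precedes it below -/
import Mathlib

section
/- For every constant step size s > 0 there are infinitely many positive integers n for which there exists a finite connected simple graph G on n vertices and an edge f of G such that one step of the normalized Ricci flow with initial unit edge weights produces w^{(1)}(f) < 0. (This is the paper's Theorem 1; the proof uses the graphs G_{q,k} below with f = {s,t}, taking q fixed and sufficiently large relative to 1/s and letting k → ∞.) -/
/-- Earth Mover's Distance between two distributions `μ ν : V → ℝ` w.r.t. a
cost function `d : V → V → ℝ`: the minimum (infimum) of the total transport cost
over all feasible transport plans. -/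
noncomputable def EMD {V : Type} (d : V → V → ℝ) (μ ν : V → ℝ) : ℝ :=
  sInf { c : ℝ | ∃ z : V → V → ℝ,
    (∀ u v, 0 ≤ z u v) ∧ (∀ u, ∑ᶠ v, z u v = μ u) ∧ (∀ v, ∑ᶠ u, z u v = ν v) ∧
    c = ∑ᶠ u, ∑ᶠ v, d u v * z u v }

/-- The degree of a vertex: the number of its neighbours. -/
noncomputable def degC {V : Type} (G : SimpleGraph V) (u : V) : ℕ :=
  Nat.card {x | G.Adj u x}

open Classical in
/-- The uniform probability distribution on the closed neighbourhood of `u`. -/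
noncomputable def Pdist {V : Type} (G : SimpleGraph V) (u : V) : V → ℝ :=
  fun w => if w = u ∨ G.Adj u w then ((degC G u : ℝ) + 1)⁻¹ else 0

/-- The graph distance, as a real-valued cost function. -/
noncomputable def gdist {V : Type} (G : SimpleGraph V) : V → V → ℝ :=
  fun a b => (G.dist a b : ℝ)

/-- The total variation distance between the closed-neighbourhood distributions of `u`, `v`. -/
noncomputable def tvd {V : Type} (G : SimpleGraph V) (u v : V) : ℝ :=
  (1 / 2) * ∑ᶠ w, |Pdist G u w - Pdist G v w|

/-- The Ollivier–Ricci curvature of the (ordered) pair `u v`. -/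
noncomputable def ricci {V : Type} (G : SimpleGraph V) (u v : V) : ℝ :=
  1 - EMD (gdist G) (Pdist G u) (Pdist G v)

lemma EMD_comm {V : Type} [Finite V] (d : V → V → ℝ) (hd : ∀ a b, d a b = d b a)
    (μ ν : V → ℝ) : EMD d μ ν = EMD d ν μ := by
  cases nonempty_fintype V
  unfold EMD
  congr 1
  ext c
  simp only [Set.mem_setOf_eq]
  constructor <;> rintro ⟨z, h0, h1, h2, rfl⟩ <;>
    refine ⟨fun a b => z b a, fun a b => h0 b a, h2, h1, ?_⟩ <;>
    · simp only [finsum_eq_sum_of_fintype]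
      rw [Finset.sum_comm]
      exact Finset.sum_congr rfl fun a _ => Finset.sum_congr rfl fun b _ => by rw [hd]

/-- The Ollivier–Ricci curvature as a function on edges (elements of `Sym2 V`). -/
noncomputable def ricciEdge {V : Type} [Finite V] (G : SimpleGraph V) : Sym2 V → ℝ :=
  Sym2.lift ⟨fun u v => ricci G u v, fun u v => by
    show ricci G u v = ricci G v u
    unfold ricci
    rw [EMD_comm (gdist G) (fun a b => by unfold gdist; rw [SimpleGraph.dist_comm])]⟩

set_option linter.unnecessarySeqFocus false
set_option linter.unusedTactic false
set_option linter.unusedSectionVars false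
set_option maxHeartbeats 1000000


section Generic
variable {V : Type} [Fintype V]

lemma emd_bdd (d : V → V → ℝ) (hd : ∀ a b, 0 ≤ d a b) (μ ν : V → ℝ) :
    ∀ c ∈ { c : ℝ | ∃ z : V → V → ℝ,
    (∀ u v, 0 ≤ z u v) ∧ (∀ u, ∑ᶠ v, z u v = μ u) ∧ (∀ v, ∑ᶠ u, z u v = ν v) ∧
    c = ∑ᶠ u, ∑ᶠ v, d u v * z u v }, (0:ℝ) ≤ c := by
  rintro c ⟨z, h0, h1, h2, rfl⟩
  exact finsum_nonneg fun u => finsum_nonneg fun v => mul_nonneg (hd u v) (h0 u v)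

lemma EMD_nonneg (d : V → V → ℝ) (hd : ∀ a b, 0 ≤ d a b) (μ ν : V → ℝ) :
    0 ≤ EMD d μ ν :=
  Real.sInf_nonneg (emd_bdd d hd μ ν)

lemma EMD_le_cost (d : V → V → ℝ) (hd : ∀ a b, 0 ≤ d a b) (μ ν : V → ℝ)
    (z : V → V → ℝ) (h0 : ∀ u v, 0 ≤ z u v) (h1 : ∀ u, ∑ᶠ v, z u v = μ u)
    (h2 : ∀ v, ∑ᶠ u, z u v = ν v) :
    EMD d μ ν ≤ ∑ᶠ u, ∑ᶠ v, d u v * z u v :=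
  csInf_le ⟨0, emd_bdd d hd μ ν⟩ ⟨z, h0, h1, h2, rfl⟩

lemma le_EMD (d : V → V → ℝ) (μ ν : V → ℝ) (g : V → ℝ)
    (hg : ∀ a b, g b - g a ≤ d a b)
    (hμ0 : ∀ u, 0 ≤ μ u) (hν0 : ∀ v, 0 ≤ ν v)
    (hμ1 : ∑ᶠ u, μ u = 1) (hν1 : ∑ᶠ v, ν v = 1) :
    (∑ᶠ v, g v * ν v) - (∑ᶠ u, g u * μ u) ≤ EMD d μ ν := by
  simp only [finsum_eq_sum_of_fintype] at hμ1 hν1 ⊢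
  apply le_csInf
  · refine ⟨_, fun u v => μ u * ν v, fun u v => mul_nonneg (hμ0 u) (hν0 v),
      fun u => ?_, fun v => ?_, rfl⟩
    · simp only [finsum_eq_sum_of_fintype, ← Finset.mul_sum, hν1, mul_one]
    · simp only [finsum_eq_sum_of_fintype, ← Finset.sum_mul, hμ1, one_mul]
  · rintro c ⟨z, h0, h1, h2, rfl⟩
    simp only [finsum_eq_sum_of_fintype] at *
    have e1 : ∑ v, g v * ν v = ∑ u, ∑ v, g v * z u v := by
      rw [Finset.sum_comm]
      exact Finset.sum_congr rfl fun v _ => by rw [← h2 v, Finset.mul_sum]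
    have e2 : ∑ u, g u * μ u = ∑ u, ∑ v, g u * z u v := by
      exact Finset.sum_congr rfl fun u _ => by rw [← h1 u, Finset.mul_sum]
    have e3 : ∀ u v : V, g v * z u v - g u * z u v ≤ d u v * z u v := fun u v => by
      have := mul_le_mul_of_nonneg_right (hg u v) (h0 u v)
      nlinarith [h0 u v]
    calc (∑ v, g v * ν v) - (∑ u, g u * μ u)
        = ∑ u, ∑ v, (g v * z u v - g u * z u v) := by
          rw [e1, e2, ← Finset.sum_sub_distrib]
          exact Finset.sum_congr rfl fun u _ => by rw [← Finset.sum_sub_distrib]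
      _ ≤ ∑ u, ∑ v, d u v * z u v :=
          Finset.sum_le_sum fun u _ => Finset.sum_le_sum fun v _ => e3 u v

end Generic
section Generic2
variable {V : Type} [Fintype V] (G : SimpleGraph V) [DecidableRel G.Adj] [DecidableEq V]

lemma degC_eq_degree (u : V) : degC G u = G.degree u := by
  have h : {x | G.Adj u x} = ↑(G.neighborFinset u) := by ext x; simp
  rw [degC, h, Nat.card_eq_fintype_card, ← Set.toFinset_card, Finset.toFinset_coe,
    SimpleGraph.card_neighborFinset_eq_degree]

lemma Pdist_nonneg (u w : V) : 0 ≤ Pdist G u w := by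
  rw [Pdist]; split
  · positivity
  · exact le_refl 0

lemma sum_Pdist (u : V) : ∑ᶠ w, Pdist G u w = 1 := by
  rw [finsum_eq_sum_of_fintype]
  have step : ∀ w ∈ Finset.univ, Pdist G u w =
      if w ∈ insert u (G.neighborFinset u) then ((degC G u : ℝ) + 1)⁻¹ else 0 := by
    intro w _
    by_cases h : w = u ∨ G.Adj u w <;>
      simp [Pdist, h, Finset.mem_insert, SimpleGraph.mem_neighborFinset]
  rw [Finset.sum_congr rfl step, Finset.sum_ite_mem, Finset.univ_inter, Finset.sum_const,
    Finset.card_insert_of_notMem (SimpleGraph.notMem_neighborFinset_self G u),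
    SimpleGraph.card_neighborFinset_eq_degree, ← degC_eq_degree, nsmul_eq_mul]
  have hne : ((degC G u : ℝ) + 1) ≠ 0 := by positivity
  push_cast
  field_simp

end Generic2
lemma sum_two {ι M : Type*} [Fintype ι] [DecidableEq ι] [AddCommMonoid M] (F : ι → M)
    (a b : ι) (hab : a ≠ b) (h : ∀ x, x ≠ a → x ≠ b → F x = 0) :
    ∑ x, F x = F a + F b := by
  have hs := Finset.sum_subset (Finset.subset_univ ({a, b} : Finset ι))
    (fun x _ hx => h x (fun e => hx (by simp [e])) (fun e => hx (by simp [e])))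
  rw [← hs, Finset.sum_pair hab]
section TheGraph

inductive Vtx (q N : ℕ) : Type
  | S : Vtx q N
  | T : Vtx q N
  | R : Vtx q N
  | P : Fin q → Vtx q N
  | L : Fin N → Vtx q N
  deriving DecidableEq

namespace Vtx
variable {q N : ℕ}

def vtxEquiv (q N : ℕ) : (Unit ⊕ Unit ⊕ Unit ⊕ Fin q ⊕ Fin N) ≃ Vtx q N where
  toFun x := match x with
    | .inl _ => S
    | .inr (.inl _) => T
    | .inr (.inr (.inl _)) => R
    | .inr (.inr (.inr (.inl i))) => P i
    | .inr (.inr (.inr (.inr j))) => L j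
  invFun v := match v with
    | S => .inl ()
    | T => .inr (.inl ())
    | R => .inr (.inr (.inl ()))
    | P i => .inr (.inr (.inr (.inl i)))
    | L j => .inr (.inr (.inr (.inr j)))
  left_inv x := by rcases x with _ | _ | _ | i | j <;> rfl
  right_inv v := by cases v <;> rfl

instance : Fintype (Vtx q N) := Fintype.ofEquiv _ (vtxEquiv q N)

lemma sum_vtx {M : Type*} [AddCommMonoid M] (f : Vtx q N → M) :
    ∑ x, f x = f S + f T + f R + (∑ i, f (P i)) + (∑ j, f (L j)) := by
  rw [← Equiv.sum_comp (vtxEquiv q N) f]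
  simp only [Fintype.sum_sum_type, Finset.univ_unique, Finset.sum_singleton]
  show f S + (f T + (f R + (_ + _))) = _
  abel

lemma card_vtx : Nat.card (Vtx q N) = q + N + 3 := by
  rw [Nat.card_congr (vtxEquiv q N).symm]
  simp [Nat.card_eq_fintype_card]
  ring

def adjB : Vtx q N → Vtx q N → Bool
  | S, T => true | T, S => true
  | S, P _ => true | P _, S => true
  | T, P _ => true | P _, T => true
  | T, R => true | R, T => true
  | R, L _ => true | L _, R => true
  | _, _ => false

def Gr (q N : ℕ) : SimpleGraph (Vtx q N) where
  Adj a b := adjB a b = true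
  symm := by constructor; intro a b h; cases a <;> cases b <;> simp_all [adjB]
  loopless := by constructor; intro a h; cases a <;> simp_all [adjB]

instance : DecidableRel (Gr q N).Adj := fun _ _ => instDecidableEqBool _ _

lemma adj_iff (a b : Vtx q N) : (Gr q N).Adj a b ↔ adjB a b = true := Iff.rfl


lemma connected : (Gr q N).Connected := by
  have h : ∀ v : Vtx q N, (Gr q N).Reachable v T := by
    intro v
    cases v with
    | S => exact SimpleGraph.Adj.reachable rfl
    | T => exact SimpleGraph.Reachable.refl _
    | R => exact SimpleGraph.Adj.reachable rfl
    | P i => exact SimpleGraph.Adj.reachable rfl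
    | L j =>
        have h1 : (Gr q N).Adj (L j) R := rfl
        have h2 : (Gr q N).Adj R T := rfl
        exact h1.reachable.trans h2.reachable
  rw [SimpleGraph.connected_iff]
  exact ⟨fun a b => (h a).trans (h b).symm, ⟨T⟩⟩

lemma degree_eval (u : Vtx q N) :
    (Gr q N).degree u = ∑ x, (if (Gr q N).Adj u x then 1 else 0) := by
  rw [← SimpleGraph.card_neighborFinset_eq_degree, SimpleGraph.neighborFinset_eq_filter,
    Finset.card_filter]

lemma degree_S : (Gr q N).degree S = q + 1 := by
  rw [degree_eval, sum_vtx]; simp [adj_iff, adjB]; omega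

lemma degree_T : (Gr q N).degree T = q + 2 := by
  rw [degree_eval, sum_vtx]; simp [adj_iff, adjB]; omega

lemma degree_R : (Gr q N).degree R = N + 1 := by
  rw [degree_eval, sum_vtx]; simp [adj_iff, adjB]; omega

lemma degree_P (i : Fin q) : (Gr q N).degree (P i) = 2 := by
  rw [degree_eval, sum_vtx]; simp [adj_iff, adjB]

lemma degree_L (j : Fin N) : (Gr q N).degree (L j) = 1 := by
  rw [degree_eval, sum_vtx]; simp [adj_iff, adjB]


lemma degC_S : degC (Gr q N) S = q + 1 := by rw [degC_eq_degree, degree_S]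
lemma degC_T : degC (Gr q N) T = q + 2 := by rw [degC_eq_degree, degree_T]
lemma degC_R : degC (Gr q N) R = N + 1 := by rw [degC_eq_degree, degree_R]
lemma degC_P (i : Fin q) : degC (Gr q N) (P i) = 2 := by rw [degC_eq_degree, degree_P]
lemma degC_L (j : Fin N) : degC (Gr q N) (L j) = 1 := by rw [degC_eq_degree, degree_L]

lemma card_edgeFinset : ((Gr q N).edgeFinset).card = 2 * q + N + 2 := by
  have h := SimpleGraph.sum_degrees_eq_twice_card_edges (Gr q N)
  rw [sum_vtx] at h
  simp only [degree_S, degree_T, degree_R, degree_P, degree_L, Finset.sum_const,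
    Finset.card_univ, Fintype.card_fin, smul_eq_mul] at h
  omega

lemma edgeSet_eq : (Gr q N).edgeSet = ↑(Gr q N).edgeFinset := by
  simp [SimpleGraph.edgeFinset]

lemma card_edgeSet : Nat.card (Gr q N).edgeSet = 2 * q + N + 2 := by
  rw [edgeSet_eq, Nat.card_eq_fintype_card, ← Set.toFinset_card, Finset.toFinset_coe,
    card_edgeFinset]

lemma dist_le3_T : (Gr q N).dist T R ≤ 3 := by
  refine le_trans (SimpleGraph.dist_le
    (SimpleGraph.Walk.cons (show (Gr q N).Adj T R from rfl) SimpleGraph.Walk.nil)) ?_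
  simp

lemma dist_le3_S : (Gr q N).dist S R ≤ 3 := by
  refine le_trans (SimpleGraph.dist_le
    (SimpleGraph.Walk.cons (show (Gr q N).Adj S T from rfl)
      (SimpleGraph.Walk.cons (show (Gr q N).Adj T R from rfl) SimpleGraph.Walk.nil))) ?_
  simp

lemma dist_le3_P (i : Fin q) : (Gr q N).dist (P i) R ≤ 3 := by
  refine le_trans (SimpleGraph.dist_le
    (SimpleGraph.Walk.cons (show (Gr q N).Adj (P i) T from rfl)
      (SimpleGraph.Walk.cons (show (Gr q N).Adj T R from rfl) SimpleGraph.Walk.nil))) ?_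
  simp


lemma PdS_eval (w : Vtx q N) :
    Pdist (Gr q N) S w = if w = S ∨ (Gr q N).Adj S w then ((q:ℝ)+2)⁻¹ else 0 := by
  by_cases h : w = S ∨ (Gr q N).Adj S w <;> simp [Pdist, degC_S, h] <;> push_cast <;> ring

lemma PdT_eval (w : Vtx q N) :
    Pdist (Gr q N) T w = if w = T ∨ (Gr q N).Adj T w then ((q:ℝ)+3)⁻¹ else 0 := by
  by_cases h : w = T ∨ (Gr q N).Adj T w <;> simp [Pdist, degC_T, h] <;> push_cast <;> ring

lemma PdR_eval (w : Vtx q N) :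
    Pdist (Gr q N) R w = if w = R ∨ (Gr q N).Adj R w then ((N:ℝ)+2)⁻¹ else 0 := by
  by_cases h : w = R ∨ (Gr q N).Adj R w <;> simp [Pdist, degC_R, h] <;> push_cast <;> ring

lemma PdL_eval (j : Fin N) (w : Vtx q N) :
    Pdist (Gr q N) (L j) w = if w = L j ∨ (Gr q N).Adj (L j) w then (2:ℝ)⁻¹ else 0 := by
  by_cases h : w = L j ∨ (Gr q N).Adj (L j) w <;> simp [Pdist, degC_L, h] <;> norm_num

lemma muS : Pdist (Gr q N) S S = ((q:ℝ)+2)⁻¹ := by rw [PdS_eval]; simp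
lemma muT : Pdist (Gr q N) S T = ((q:ℝ)+2)⁻¹ := by
  rw [PdS_eval]; simp [adj_iff, adjB]
lemma muP (i : Fin q) : Pdist (Gr q N) S (P i) = ((q:ℝ)+2)⁻¹ := by
  rw [PdS_eval]; simp [adj_iff, adjB]
lemma muR : Pdist (Gr q N) S R = 0 := by rw [PdS_eval]; simp [adj_iff, adjB]
lemma muL (j : Fin N) : Pdist (Gr q N) S (L j) = 0 := by rw [PdS_eval]; simp [adj_iff, adjB]

lemma nuS : Pdist (Gr q N) T S = ((q:ℝ)+3)⁻¹ := by rw [PdT_eval]; simp [adj_iff, adjB]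
lemma nuT : Pdist (Gr q N) T T = ((q:ℝ)+3)⁻¹ := by rw [PdT_eval]; simp
lemma nuP (i : Fin q) : Pdist (Gr q N) T (P i) = ((q:ℝ)+3)⁻¹ := by
  rw [PdT_eval]; simp [adj_iff, adjB]
lemma nuR : Pdist (Gr q N) T R = ((q:ℝ)+3)⁻¹ := by rw [PdT_eval]; simp [adj_iff, adjB]
lemma nuL (j : Fin N) : Pdist (Gr q N) T (L j) = 0 := by rw [PdT_eval]; simp [adj_iff, adjB]

lemma rS : Pdist (Gr q N) R S = 0 := by rw [PdR_eval]; simp [adj_iff, adjB]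
lemma rT : Pdist (Gr q N) R T = ((N:ℝ)+2)⁻¹ := by rw [PdR_eval]; simp [adj_iff, adjB]
lemma rR : Pdist (Gr q N) R R = ((N:ℝ)+2)⁻¹ := by rw [PdR_eval]; simp
lemma rP (i : Fin q) : Pdist (Gr q N) R (P i) = 0 := by rw [PdR_eval]; simp [adj_iff, adjB]
lemma rL (j : Fin N) : Pdist (Gr q N) R (L j) = ((N:ℝ)+2)⁻¹ := by
  rw [PdR_eval]; simp [adj_iff, adjB]

lemma lS (j : Fin N) : Pdist (Gr q N) (L j) S = 0 := by rw [PdL_eval]; simp [adj_iff, adjB]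
lemma lT (j : Fin N) : Pdist (Gr q N) (L j) T = 0 := by rw [PdL_eval]; simp [adj_iff, adjB]
lemma lP (j : Fin N) (i : Fin q) : Pdist (Gr q N) (L j) (P i) = 0 := by
  rw [PdL_eval]; simp [adj_iff, adjB]
lemma lR (j : Fin N) : Pdist (Gr q N) (L j) R = (2:ℝ)⁻¹ := by
  rw [PdL_eval]; simp [adj_iff, adjB]
lemma lself (j : Fin N) : Pdist (Gr q N) (L j) (L j) = (2:ℝ)⁻¹ := by rw [PdL_eval]; simp
lemma lL (j j' : Fin N) (h : j' ≠ j) : Pdist (Gr q N) (L j) (L j') = 0 := by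
  rw [PdL_eval]; simp [adj_iff, adjB, h]


lemma dist_ge_one {a b : Vtx q N} (h : a ≠ b) : (1:ℝ) ≤ gdist (Gr q N) a b := by
  have hp : 0 < (Gr q N).dist a b := (connected (q := q) (N := N)).pos_dist_of_ne h
  rw [gdist]
  exact_mod_cast hp

lemma dist_ge_two {a b : Vtx q N} (hne : a ≠ b) (hadj : ¬ (Gr q N).Adj a b) :
    (2:ℝ) ≤ gdist (Gr q N) a b := by
  have hp : 0 < (Gr q N).dist a b := (connected (q := q) (N := N)).pos_dist_of_ne hne
  have h1 : (Gr q N).dist a b ≠ 1 := fun e => hadj (SimpleGraph.dist_eq_one_iff_adj.mp e)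
  rw [gdist]
  exact_mod_cast (by omega : 2 ≤ (Gr q N).dist a b)

lemma not_adj_L (j : Fin N) : ∀ a : Vtx q N, a ≠ R → ¬ (Gr q N).Adj a (L j) := by
  intro a haR h
  cases a <;> simp_all [adj_iff, adjB]

lemma ricci_leaf (j : Fin N) (hN : 10 ≤ N) : ricci (Gr q N) R (L j) ≤ -(1/4) := by
  classical
  set g : Vtx q N → ℝ := fun x => if x = L j then 2 else if x = R then 1 else 0 with hgdef
  have hg0 : ∀ a, 0 ≤ g a := by
    intro a
    simp only [hgdef]
    split
    · norm_num
    · split <;> norm_num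
  have hglip : ∀ a b, g b - g a ≤ gdist (Gr q N) a b := by
    intro a b
    have hd0 : (0:ℝ) ≤ gdist (Gr q N) a b := Nat.cast_nonneg _
    by_cases hbL : b = L j
    · subst hbL
      by_cases haL : a = L j
      · subst haL; simp only [sub_self]; exact hd0
      · by_cases haR : a = R
        · subst haR
          have h1 := dist_ge_one (q := q) (N := N) (show R ≠ L j by simp)
          have e1 : g (L j) = 2 := by simp [hgdef]
          have e2 : g R = 1 := by simp [hgdef]
          rw [e1, e2]; linarith
        · have h2 := dist_ge_two (q := q) (N := N) haL (not_adj_L j a haR)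
          simp only [hgdef, if_pos rfl, if_neg haL, if_neg haR]
          linarith
    · by_cases hbR : b = R
      · subst hbR
        by_cases haR : a = R
        · subst haR; simp only [sub_self]; exact hd0
        · have h1 := dist_ge_one (q := q) (N := N) haR
          have hga := hg0 a
          have hgR : g R = 1 := by simp [hgdef]
          linarith
      · have hga := hg0 a
        have hgb : g b = 0 := by simp [hgdef, hbL, hbR]
        linarith
  have hEMD := le_EMD (gdist (Gr q N)) (Pdist (Gr q N) R) (Pdist (Gr q N) (L j)) g hglip
    (fun u => Pdist_nonneg _ R u) (fun v => Pdist_nonneg _ (L j) v) (sum_Pdist _ R) (sum_Pdist _ (L j))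
  have hA : ∑ᶠ v, g v * Pdist (Gr q N) (L j) v = 3/2 := by
    rw [finsum_eq_sum_of_fintype, sum_vtx]
    have e5 : ∑ j', g (L j') * Pdist (Gr q N) (L j) (L j')
        = ∑ j' : Fin N, (if j' = j then (1:ℝ) else 0) := by
      refine Finset.sum_congr rfl fun j' _ => ?_
      by_cases h : j' = j
      · subst h; rw [lself]; simp [hgdef]
      · rw [lL j j' h]; simp [h]
    rw [e5]
    have hgS : g S = 0 := by simp [hgdef]
    have hgT : g T = 0 := by simp [hgdef]
    have hgR : g R = 1 := by simp [hgdef]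
    have hgP : ∀ i : Fin q, g (P i) = 0 := fun i => by simp [hgdef]
    simp [hgS, hgT, hgR, hgP, lR, Finset.sum_ite_eq']
    norm_num
  have hB : ∑ᶠ u, g u * Pdist (Gr q N) R u = 3 * ((N:ℝ)+2)⁻¹ := by
    rw [finsum_eq_sum_of_fintype, sum_vtx]
    have e5 : ∑ j', g (L j') * Pdist (Gr q N) R (L j')
        = ∑ j' : Fin N, (if j' = j then 2 * ((N:ℝ)+2)⁻¹ else 0) := by
      refine Finset.sum_congr rfl fun j' _ => ?_
      by_cases h : j' = j
      · subst h; rw [rL]; simp [hgdef]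
      · rw [rL]; simp [hgdef, h]
    rw [e5]
    have hgS : g S = 0 := by simp [hgdef]
    have hgT : g T = 0 := by simp [hgdef]
    have hgR : g R = 1 := by simp [hgdef]
    have hgP : ∀ i : Fin q, g (P i) = 0 := fun i => by simp [hgdef]
    simp [hgS, hgT, hgR, hgP, rR, Finset.sum_ite_eq']
    ring
  rw [hA, hB] at hEMD
  have h12 : (12:ℝ) ≤ (N:ℝ) + 2 := by
    have : (10:ℝ) ≤ (N:ℝ) := by exact_mod_cast hN
    linarith
  have hinv : ((N:ℝ)+2)⁻¹ ≤ 12⁻¹ := inv_anti₀ (by norm_num) h12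
  rw [ricci]
  linarith


lemma c3_le_c2 : ((q:ℝ)+3)⁻¹ ≤ ((q:ℝ)+2)⁻¹ :=
  inv_anti₀ (by positivity) (by linarith)

lemma emd_ST :
    EMD (gdist (Gr q N)) (Pdist (Gr q N) S) (Pdist (Gr q N) T) ≤ 3 * ((q:ℝ)+3)⁻¹ := by
  classical
  set μ : Vtx q N → ℝ := Pdist (Gr q N) S with hμ
  set ν : Vtx q N → ℝ := Pdist (Gr q N) T with hν
  set z : Vtx q N → Vtx q N → ℝ :=
    fun a b => if a = b then min (μ a) (ν a) else
      if b = R then μ a - min (μ a) (ν a) else 0 with hz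
  have hμ0 : ∀ a, 0 ≤ μ a := fun a => Pdist_nonneg _ S a
  have hν0 : ∀ a, 0 ≤ ν a := fun a => Pdist_nonneg _ T a
  have hmin_le : ∀ a, min (μ a) (ν a) ≤ μ a := fun a => min_le_left _ _
  have hmin0 : ∀ a, 0 ≤ min (μ a) (ν a) := fun a => le_min (hμ0 a) (hν0 a)
  have h0 : ∀ a b, 0 ≤ z a b := by
    intro a b
    simp only [hz]
    split
    · exact hmin0 a
    · split
      · linarith [hmin_le a]
      · exact le_refl 0
  have hmin : ∀ a, min (μ a) (ν a) = ν a - (if a = R then ((q:ℝ)+3)⁻¹ else 0) := by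
    intro a
    cases a with
    | S => rw [hμ, hν, muS, nuS, min_eq_right c3_le_c2]; simp
    | T => rw [hμ, hν, muT, nuT, min_eq_right c3_le_c2]; simp
    | R => rw [hμ, hν, muR, nuR]; simp [min_eq_left, inv_nonneg.mpr]; positivity
    | P i => rw [hμ, hν, muP i, nuP i, min_eq_right c3_le_c2]; simp
    | L j => rw [hμ, hν, muL j, nuL j]; simp
  have hsumν : ∑ a, ν a = 1 := by
    rw [← finsum_eq_sum_of_fintype]; exact sum_Pdist _ T
  have hsumμ : ∑ a, μ a = 1 := by
    rw [← finsum_eq_sum_of_fintype]; exact sum_Pdist _ S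
  have hsum_min : ∑ a, min (μ a) (ν a) = 1 - ((q:ℝ)+3)⁻¹ := by
    rw [Finset.sum_congr rfl fun a _ => hmin a, Finset.sum_sub_distrib, hsumν,
      Finset.sum_ite_eq' Finset.univ R (fun _ => ((q:ℝ)+3)⁻¹)]
    simp
  have hμRzero : μ R = 0 := by rw [hμ, muR]
  have hminR : min (μ R) (ν R) = 0 := by
    rw [hμRzero, min_eq_left (hν0 R)]
  have hrow : ∀ a, ∑ᶠ b, z a b = μ a := by
    intro a
    rw [finsum_eq_sum_of_fintype]
    by_cases ha : a = R
    · subst ha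
      rw [Finset.sum_eq_zero, hμRzero]
      intro b _
      by_cases hb : R = b
      · rw [← hb]; simp only [hz, if_pos rfl]; exact hminR
      · have hbR : ¬ (b = R) := fun e => hb e.symm
        simp [hz, hb, hbR]
    · rw [sum_two (fun b => z a b) a R ha
        (fun x hxa hxR => by
          simp only [hz]; rw [if_neg (fun e => hxa e.symm), if_neg hxR])]
      have e1 : z a a = min (μ a) (ν a) := by simp [hz]
      have e2 : z a R = μ a - min (μ a) (ν a) := by simp [hz, ha]
      rw [e1, e2]; ring
  have hcol : ∀ b, ∑ᶠ a, z a b = ν b := by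
    intro b
    rw [finsum_eq_sum_of_fintype]
    by_cases hb : b = R
    · subst hb
      have hsteps : ∀ a, z a R = μ a - min (μ a) (ν a) := by
        intro a
        by_cases ha : a = R
        · subst ha; simp only [hz, if_pos rfl]; rw [hminR, hμRzero]; ring
        · simp [hz, ha]
      rw [Finset.sum_congr rfl fun a _ => hsteps a, Finset.sum_sub_distrib, hsum_min, hsumμ,
        hν, nuR]
      ring
    · rw [Finset.sum_eq_single b (fun a _ hab => by simp [hz, hab, hb])
        (fun h => absurd (Finset.mem_univ b) h)]
      have e1 : z b b = min (μ b) (ν b) := by simp [hz]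
      rw [e1, hmin b, if_neg hb]; ring
  have hEMD := EMD_le_cost (gdist (Gr q N)) (fun a b => Nat.cast_nonneg _) μ ν z h0 hrow hcol
  have hinner : ∀ a, (∑ᶠ b, gdist (Gr q N) a b * z a b) ≤ 3 * (μ a - min (μ a) (ν a)) := by
    intro a
    rw [finsum_eq_sum_of_fintype]
    by_cases ha : a = R
    · subst ha
      rw [Finset.sum_eq_zero, hminR, hμRzero]
      · norm_num
      · intro b _
        by_cases hb : R = b
        · rw [← hb]; simp only [hz, if_pos rfl]; rw [hminR]; ring
        · have hbR : ¬ (b = R) := fun e => hb e.symm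
          simp [hz, hb, hbR]
    · rw [sum_two (fun b => gdist (Gr q N) a b * z a b) a R ha
        (fun x hxa hxR => by
          simp only [hz]; rw [if_neg (fun e => hxa e.symm), if_neg hxR, mul_zero])]
      have ea : gdist (Gr q N) a a = 0 := by rw [gdist, SimpleGraph.dist_self]; norm_num
      have eb : z a R = μ a - min (μ a) (ν a) := by simp [hz, ha]
      rw [ea, eb, zero_mul, zero_add]
      have hex : 0 ≤ μ a - min (μ a) (ν a) := by linarith [hmin_le a]
      cases a with
      | S =>
        have h3 : gdist (Gr q N) S R ≤ 3 := by
          rw [gdist]; exact_mod_cast dist_le3_S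
        exact mul_le_mul_of_nonneg_right h3 hex
      | T =>
        have h3 : gdist (Gr q N) T R ≤ 3 := by
          rw [gdist]; exact_mod_cast dist_le3_T
        exact mul_le_mul_of_nonneg_right h3 hex
      | P i =>
        have h3 : gdist (Gr q N) (P i) R ≤ 3 := by
          rw [gdist]; exact_mod_cast dist_le3_P i
        exact mul_le_mul_of_nonneg_right h3 hex
      | R => exact absurd rfl ha
      | L j =>
        have : μ (L j) = 0 := by rw [hμ, muL j]
        have hm : min (μ (L j)) (ν (L j)) = 0 := by
          rw [this, min_eq_left (hν0 (L j))]
        rw [hm, this]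
        norm_num
  have hcost : (∑ᶠ a, ∑ᶠ b, gdist (Gr q N) a b * z a b) ≤ 3 * ((q:ℝ)+3)⁻¹ := by
    rw [finsum_eq_sum_of_fintype]
    calc ∑ a, ∑ᶠ b, gdist (Gr q N) a b * z a b
        ≤ ∑ a, 3 * (μ a - min (μ a) (ν a)) := Finset.sum_le_sum fun a _ => hinner a
      _ = 3 * ((q:ℝ)+3)⁻¹ := by
          rw [← Finset.mul_sum, Finset.sum_sub_distrib, hsumμ, hsum_min]; ring
  linarith


lemma ricciEdge_mk (u v : Vtx q N) :
    ricciEdge (Gr q N) s(u, v) = ricci (Gr q N) u v := rfl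

lemma edge_mem : s(S, T) ∈ (Gr q N).edgeSet := by
  rw [SimpleGraph.mem_edgeSet]; exact rfl

lemma ricciEdge_le_one (e : Sym2 (Vtx q N)) : ricciEdge (Gr q N) e ≤ 1 := by
  induction e using Sym2.ind with
  | _ u v =>
    rw [ricciEdge_mk, ricci]
    have := EMD_nonneg (gdist (Gr q N)) (fun a b => Nat.cast_nonneg _)
      (Pdist (Gr q N) u) (Pdist (Gr q N) v)
    linarith

lemma sum_ricci_bound (hN : 10 ≤ N) :
    (∑ᶠ h ∈ (Gr q N).edgeSet, ricciEdge (Gr q N) h)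
      ≤ (2*(q:ℝ)+2) + (N:ℝ) * (-(1/4)) := by
  classical
  rw [edgeSet_eq, finsum_mem_coe_finset]
  set LF : Finset (Sym2 (Vtx q N)) := Finset.univ.image (fun j : Fin N => s(R, L j)) with hLF
  have hinj : Function.Injective (fun j : Fin N => (s(R, L j) : Sym2 (Vtx q N))) := by
    intro a b h
    have h2 : (L a : Vtx q N) = L b := Sym2.congr_right.mp h
    simpa using h2
  have hsub : LF ⊆ (Gr q N).edgeFinset := by
    intro e he
    simp only [hLF, Finset.mem_image, Finset.mem_univ, true_and] at he
    obtain ⟨j, rfl⟩ := he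
    rw [SimpleGraph.mem_edgeFinset, SimpleGraph.mem_edgeSet]
    exact rfl
  have hcardLF : LF.card = N := by
    rw [hLF, Finset.card_image_of_injective _ hinj, Finset.card_univ, Fintype.card_fin]
  rw [← Finset.sum_sdiff hsub]
  have h1 : ∑ e ∈ (Gr q N).edgeFinset \ LF, ricciEdge (Gr q N) e ≤ (2*(q:ℝ)+2) := by
    calc ∑ e ∈ (Gr q N).edgeFinset \ LF, ricciEdge (Gr q N) e
        ≤ ((Gr q N).edgeFinset \ LF).card • (1:ℝ) :=
          Finset.sum_le_card_nsmul _ _ 1 (fun e _ => ricciEdge_le_one e)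
      _ = (2*(q:ℝ)+2) := by
          rw [Finset.card_sdiff_of_subset hsub, card_edgeFinset, hcardLF, nsmul_eq_mul]
          have : 2 * q + N + 2 - N = 2 * q + 2 := by omega
          rw [this]
          push_cast
          ring
  have h2 : ∑ e ∈ LF, ricciEdge (Gr q N) e ≤ (N:ℝ) * (-(1/4)) := by
    rw [hLF, Finset.sum_image (fun a _ b _ h => hinj h)]
    calc ∑ j : Fin N, ricciEdge (Gr q N) s(R, L j)
        ≤ ∑ _j : Fin N, (-(1/4) : ℝ) :=
          Finset.sum_le_sum (fun j _ => by rw [ricciEdge_mk]; exact ricci_leaf j hN)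
      _ = (N:ℝ) * (-(1/4)) := by
          rw [Finset.sum_const, Finset.card_univ, Fintype.card_fin, nsmul_eq_mul]
  linarith

end Vtx
end TheGraph

open Vtx in
/-- For every constant step size `s > 0` there are infinitely many
positive integers `n` for which there exists a finite connected simple graph `G` on `n`
vertices and an edge `f` of `G` such that one step of the normalized Ricci flow with
initial unit edge weights produces `w⁽¹⁾(f) < 0`, where
`w⁽¹⁾(f) = 1 - C_G(f) + (s/m) · Σ_{h ∈ E} C_G(h)` and `m = |E|`. -/
theorem normalized_ricci_flow_negative_weight (s : ℝ) (hs : 0 < s) :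
    { n : ℕ | 0 < n ∧ ∃ (V : Type) (hV : Finite V) (G : SimpleGraph V) (f : Sym2 V),
      G.Connected ∧ Nat.card V = n ∧ f ∈ G.edgeSet ∧
      1 - @ricciEdge V hV G f +
        (s / (Nat.card G.edgeSet : ℝ)) * ∑ᶠ h ∈ G.edgeSet, @ricciEdge V hV G h
          < 0 }.Infinite := by
  set Q : ℕ := max 1 ⌈(30:ℝ)/s⌉₊ with hQ
  refine Set.Infinite.mono ?_ (Set.Ici_infinite (Q + 20*(2*Q+2) + 3))
  intro n hn
  have hn0 : Q + 20*(2*Q+2) + 3 ≤ n := hn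
  set NN : ℕ := n - Q - 3 with hNN
  have hn' : n = Q + NN + 3 := by omega
  have hN10 : 10 ≤ NN := by omega
  have hN20 : 20*(2*Q+2) ≤ NN := by omega
  have hQ1 : 1 ≤ Q := le_max_left _ _
  refine ⟨by omega, Vtx Q NN, inferInstance, Gr Q NN, s(S, T), connected, ?_, edge_mem, ?_⟩
  · rw [card_vtx]; omega
  · -- the inequality
    rw [card_edgeSet]
    have ha1 : (1:ℝ) ≤ (Q:ℝ) := by exact_mod_cast hQ1
    have hapos : (0:ℝ) < (Q:ℝ) := by linarith
    have h30 : (30:ℝ) ≤ s * (Q:ℝ) := by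
      have hceil : ((30:ℝ)/s) ≤ (⌈(30:ℝ)/s⌉₊ : ℝ) := Nat.le_ceil _
      have hle : ((⌈(30:ℝ)/s⌉₊ : ℕ) : ℝ) ≤ (Q:ℝ) := by
        exact_mod_cast le_max_right 1 ⌈(30:ℝ)/s⌉₊
      have : (30:ℝ)/s ≤ (Q:ℝ) := le_trans hceil hle
      calc (30:ℝ) = s * ((30:ℝ)/s) := by field_simp
        _ ≤ s * (Q:ℝ) := mul_le_mul_of_nonneg_left this (le_of_lt hs)
    have hn20 : 20*(2*(Q:ℝ)+2) ≤ (NN:ℝ) := by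
      have : ((20*(2*Q+2) : ℕ) : ℝ) ≤ ((NN:ℕ) : ℝ) := by exact_mod_cast hN20
      push_cast at this
      linarith
    have hcast : ((2*Q+NN+2 : ℕ) : ℝ) = 2*(Q:ℝ)+(NN:ℝ)+2 := by push_cast; ring
    rw [hcast]
    have hmpos : (0:ℝ) < 2*(Q:ℝ)+(NN:ℝ)+2 := by positivity
    have hdiv : (0:ℝ) ≤ s / (2*(Q:ℝ)+(NN:ℝ)+2) := by positivity
    have hedge : (1:ℝ) - ricciEdge (Gr Q NN) s(S, T) ≤ 3*((Q:ℝ)+3)⁻¹ := by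
      rw [ricciEdge_mk, ricci]
      have := emd_ST (q := Q) (N := NN)
      linarith
    have hsum := sum_ricci_bound (q := Q) (N := NN) hN10
    have hSig : (∑ᶠ h ∈ (Gr Q NN).edgeSet, ricciEdge (Gr Q NN) h)
        ≤ (2*(Q:ℝ)+2) - (NN:ℝ)/4 := by linarith
    have hprod : (s / (2*(Q:ℝ)+(NN:ℝ)+2)) * (∑ᶠ h ∈ (Gr Q NN).edgeSet, ricciEdge (Gr Q NN) h)
        ≤ (s / (2*(Q:ℝ)+(NN:ℝ)+2)) * ((2*(Q:ℝ)+2) - (NN:ℝ)/4) :=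
      mul_le_mul_of_nonneg_left hSig hdiv
    have hT2 : (s / (2*(Q:ℝ)+(NN:ℝ)+2)) * ((2*(Q:ℝ)+2) - (NN:ℝ)/4) ≤ -(s/7) := by
      have hXm : (2*(Q:ℝ)+2) - (NN:ℝ)/4 ≤ -((2*(Q:ℝ)+(NN:ℝ)+2)/7) := by linarith
      calc (s / (2*(Q:ℝ)+(NN:ℝ)+2)) * ((2*(Q:ℝ)+2) - (NN:ℝ)/4)
          ≤ (s / (2*(Q:ℝ)+(NN:ℝ)+2)) * (-((2*(Q:ℝ)+(NN:ℝ)+2)/7)) :=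
            mul_le_mul_of_nonneg_left hXm hdiv
        _ = -(s/7) := by
            field_simp
    have hq3 : 3*((Q:ℝ)+3)⁻¹ < s/10 := by
      have h1 : ((Q:ℝ)+3)⁻¹ < (Q:ℝ)⁻¹ := by
        apply inv_strictAnti₀ hapos
        linarith
      have h2 : (3:ℝ)/(Q:ℝ) ≤ s/10 := by
        rw [div_le_div_iff₀ hapos (by norm_num)]
        linarith
      have h3 : (3:ℝ) * (Q:ℝ)⁻¹ = 3/(Q:ℝ) := by ring
      nlinarith
    linarith
end

section
/- Let G be a finite connected simple graph with at least two vertices, let u be a vertex of degree 1 with unique neighbor v, and let d = deg_G(v). Then EMD_{dist_G}(P_u, P_v) = 3(d − 1)/(2(d + 1)); equivalently, the Ollivier–Ricci curvature of the pendant edge {u,v} equals C_G({u,v}) = (5 − d)/(2(d + 1)). (This is the corrected form of the paper's bound (eqb3) for edges whose one endpoint has closed neighborhood {u,v}; the paper's printed expression 3/2 − 1/(2d+2) contains an arithmetic slip, the true value being 3/2 − 3/(2(d+1)).) -/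
private lemma ricci_arith (K : ℝ) (hK : 0 ≤ K) :
    1 - 3 * K / (2 * (K + 2)) = (5 - (K + 1)) / (2 * ((K + 1) + 1)) := by
  have h : K + 2 ≠ 0 := by linarith
  field_simp
  ring

set_option maxHeartbeats 1000000 in
private theorem emd_pendant_edge_aux {V : Type} [Finite V] (G : SimpleGraph V) (hG : G.Connected)
    (hcard : 2 ≤ Nat.card V) (u v : V) (huv : G.Adj u v)
    (huniq : ∀ w : V, G.Adj u w → w = v) :
    EMD (gdist G) (Pdist G u) (Pdist G v)
        = 3 * ((degC G v : ℝ) - 1) / (2 * ((degC G v : ℝ) + 1)) ∧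
    ricci G u v = (5 - (degC G v : ℝ)) / (2 * ((degC G v : ℝ) + 1)) := by
  classical
  haveI : Fintype V := Fintype.ofFinite V
  have hvu : G.Adj v u := huv.symm
  have hune : u ≠ v := huv.ne
  -- degree of u is 1
  have hdegu : degC G u = 1 := by
    have hsetu : {x | G.Adj u x} = {v} := by
      ext x
      simp only [Set.mem_setOf_eq, Set.mem_singleton_iff]
      exact ⟨fun h => huniq x h, fun h => h ▸ huv⟩
    rw [degC, hsetu]
    simp
  -- the set of "outer" neighbours of v
  set W : Finset V := Finset.univ.filter (fun y => G.Adj v y ∧ y ≠ u) with hW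
  have hmemW : ∀ y, y ∈ W ↔ (G.Adj v y ∧ y ≠ u) := by
    intro y; simp [hW]
  have huW : u ∉ W := by simp [hmemW]
  have hvW : v ∉ W := by simp [hmemW]
  set k : ℕ := W.card with hk
  -- degC G v = k + 1
  have hdegv : degC G v = k + 1 := by
    have h1 : degC G v = (Finset.univ.filter (fun x => G.Adj v x)).card := by
      rw [degC, Nat.card_eq_fintype_card]
      exact Fintype.card_subtype _
    have h2 : Finset.univ.filter (fun x => G.Adj v x) = insert u W := by
      ext x
      by_cases hx : x = u <;> simp [hmemW, hx, hvu]
    rw [h1, h2, Finset.card_insert_of_notMem huW]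
  set K : ℝ := (k : ℝ) with hKdef
  have hKn : ((degC G v : ℕ) : ℝ) = K + 1 := by rw [hdegv]; push_cast; ring
  have hK0 : (0:ℝ) ≤ K := Nat.cast_nonneg k
  have hK2 : (0:ℝ) < K + 2 := by linarith
  set α : ℝ := (K + 2)⁻¹ with hα
  set β : ℝ := (2 * (K + 2))⁻¹ with hβ
  set T : ℝ := 3 * K / (2 * (K + 2)) with hT
  -- distances
  have hduv : G.dist u v = 1 := SimpleGraph.dist_eq_one_iff_adj.mpr huv
  have hdist1 : ∀ y ∈ W, G.dist v y = 1 := fun y hy =>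
    SimpleGraph.dist_eq_one_iff_adj.mpr ((hmemW y).mp hy).1
  have hdist2 : ∀ y ∈ W, G.dist u y = 2 := by
    intro y hy
    obtain ⟨hadj, hyu⟩ := (hmemW y).mp hy
    have hle : G.dist u y ≤ 2 := by
      have := hG.dist_triangle (u := u) (v := v) (w := y)
      rw [hduv, SimpleGraph.dist_eq_one_iff_adj.mpr hadj] at this
      omega
    have h0 : G.dist u y ≠ 0 := by
      intro h0
      exact hyu (hG.dist_eq_zero_iff.mp h0).symm
    have h1 : G.dist u y ≠ 1 := by
      intro h1
      exact hadj.ne' (huniq y (SimpleGraph.dist_eq_one_iff_adj.mp h1))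
    omega
  -- rewriting the two distributions
  have hvne : v ≠ u := hune.symm
  have hPu : ∀ x, Pdist G u x
      = (if x = u then (2:ℝ)⁻¹ else 0) + (if x = v then (2:ℝ)⁻¹ else 0) := by
    intro x
    by_cases h1 : x = u
    · simp [Pdist, h1, hdegu, hune]
      norm_num
    · by_cases h2 : x = v
      · simp [Pdist, h1, h2, hdegu, huv, hvne]
        norm_num
      · have : ¬ G.Adj u x := fun h => h2 (huniq x h)
        simp [Pdist, h1, h2, this]
  have hPv : ∀ y, Pdist G v y
      = (if y = u then α else 0) + (if y = v then α else 0)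
        + (if y ∈ W then α else 0) := by
    intro y
    by_cases h1 : y = u
    · simp only [Pdist, h1, hvu, or_true, if_true, hKn, if_pos rfl, if_neg hune, huW,
        if_neg huW, add_zero, zero_add, hα]
      ring_nf
      simp
    · by_cases h2 : y = v
      · simp only [Pdist, h1, h2, or_false, true_or, if_true, if_pos rfl, hKn,
        if_neg hvne, if_neg hvW, add_zero, zero_add, hα]
        ring_nf
      · by_cases h3 : G.Adj v y
        · have : y ∈ W := (hmemW y).mpr ⟨h3, h1⟩
          simp only [Pdist, h1, h2, h3, or_true, if_true, hKn, if_neg h1, if_neg h2,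
            if_pos this, add_zero, zero_add, hα]
          ring_nf
          simp
        · have : y ∉ W := fun h => h3 ((hmemW y).mp h).1
          simp [Pdist, h1, h2, h3, this]
  -- summation helpers
  have hK2ne : K + 2 ≠ 0 := ne_of_gt hK2
  have hsum_ite_eq : ∀ (f : V → ℝ) (b : V), ∑ x, (if x = b then f x else 0) = f b := by
    intro f b
    exact (Finset.sum_ite_eq' Finset.univ b f).trans (by simp)
  have hα0 : (0:ℝ) ≤ α := by rw [hα]; positivity
  have hβ0 : (0:ℝ) ≤ β := by rw [hβ]; positivity
  have h2β : β + β = α := by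
    rw [hα, hβ, show (2:ℝ)*(K+2) = (K+2)*2 by ring, mul_inv]
    ring_nf
  have hrowval : α + K * β = 2⁻¹ := by
    rw [hα, hβ]
    field_simp
    ring
  -- the transport plan
  set A : V → ℝ := fun b => (if b = u then α else 0) + (if b ∈ W then β else 0) with hAdef
  set B : V → ℝ := fun b => (if b = v then α else 0) + (if b ∈ W then β else 0) with hBdef
  have hAsum : ∑ b, A b = 2⁻¹ := by
    simp only [hAdef]
    rw [Finset.sum_add_distrib, hsum_ite_eq (fun _ => α) u,
      Finset.sum_ite_mem, Finset.univ_inter, Finset.sum_const, nsmul_eq_mul]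
    exact hrowval
  have hBsum : ∑ b, B b = 2⁻¹ := by
    simp only [hBdef]
    rw [Finset.sum_add_distrib, hsum_ite_eq (fun _ => α) v,
      Finset.sum_ite_mem, Finset.univ_inter, Finset.sum_const, nsmul_eq_mul]
    exact hrowval
  have hA0 : ∀ b, 0 ≤ A b := by
    intro b
    simp only [hAdef]
    split_ifs <;> linarith [hα0, hβ0]
  have hB0 : ∀ b, 0 ≤ B b := by
    intro b
    simp only [hBdef]
    split_ifs <;> linarith [hα0, hβ0]
  -- membership of T in the feasible-cost set
  have hmemT : T ∈ { c : ℝ | ∃ z : V → V → ℝ,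
      (∀ a b, 0 ≤ z a b) ∧ (∀ a, ∑ᶠ b, z a b = Pdist G u a) ∧
      (∀ b, ∑ᶠ a, z a b = Pdist G v b) ∧
      c = ∑ᶠ a, ∑ᶠ b, gdist G a b * z a b } := by
    refine ⟨fun x y => (if x = u then A y else 0) + (if x = v then B y else 0),
      ?_, ?_, ?_, ?_⟩
    · intro a b
      have h1 := hA0 b
      have h2 := hB0 b
      dsimp only
      split_ifs <;> linarith
    · intro a
      rw [finsum_eq_sum_of_fintype]
      dsimp only
      have pull : ∀ (g : V → ℝ) (w : V),
          ∑ b, (if a = w then g b else 0) = if a = w then ∑ b, g b else 0 := by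
        intro g w
        split_ifs <;> simp
      rw [Finset.sum_add_distrib, pull A u, pull B v, hAsum, hBsum, hPu a]
    · intro b
      have hABpt : A b + B b = Pdist G v b := by
        rw [hPv b]
        simp only [hAdef, hBdef]
        split_ifs <;> linarith [h2β]
      rw [finsum_eq_sum_of_fintype]
      dsimp only
      rw [Finset.sum_add_distrib, hsum_ite_eq (fun _ => A b) u,
        hsum_ite_eq (fun _ => B b) v]
      exact hABpt
    · simp only [finsum_eq_sum_of_fintype]
      rw [Finset.sum_comm]
      have hstep : ∀ b, ∑ a, gdist G a b * ((if a = u then A b else 0) + (if a = v then B b else 0))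
          = gdist G u b * A b + gdist G v b * B b := by
        intro b
        have hpt : ∀ a, gdist G a b * ((if a = u then A b else 0) + (if a = v then B b else 0))
            = (if a = u then gdist G a b * A b else 0) + (if a = v then gdist G a b * B b else 0) := by
          intro a
          split_ifs <;> ring
        rw [Finset.sum_congr rfl fun a _ => hpt a, Finset.sum_add_distrib,
          hsum_ite_eq (fun a => gdist G a b * A b) u,
          hsum_ite_eq (fun a => gdist G a b * B b) v]
      rw [Finset.sum_congr rfl fun b _ => hstep b]
      have hexp : ∀ b, gdist G u b * A b + gdist G v b * B b
          = ((if b = u then gdist G u b * α else 0) + (if b ∈ W then gdist G u b * β else 0))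
          + ((if b = v then gdist G v b * α else 0) + (if b ∈ W then gdist G v b * β else 0)) := by
        intro b
        simp only [hAdef, hBdef]
        split_ifs <;> ring
      rw [Finset.sum_congr rfl fun b _ => hexp b, Finset.sum_add_distrib,
        Finset.sum_add_distrib, Finset.sum_add_distrib,
        hsum_ite_eq (fun b => gdist G u b * α) u,
        hsum_ite_eq (fun b => gdist G v b * α) v,
        Finset.sum_ite_mem, Finset.univ_inter,
        Finset.sum_ite_mem, Finset.univ_inter]
      have hc1 : ∑ b ∈ W, gdist G u b * β = K * (2 * β) := by
        rw [Finset.sum_congr rfl (fun b hb => by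
          rw [show gdist G u b = 2 by simp [gdist, hdist2 b hb]]),
          Finset.sum_const, nsmul_eq_mul]
      have hc2 : ∑ b ∈ W, gdist G v b * β = K * (1 * β) := by
        rw [Finset.sum_congr rfl (fun b hb => by
          rw [show gdist G v b = 1 by simp [gdist, hdist1 b hb]]),
          Finset.sum_const, nsmul_eq_mul]
      have hgu : gdist G u u = 0 := by simp [gdist]
      have hgv : gdist G v v = 0 := by simp [gdist]
      rw [hc1, hc2, hgu, hgv, hT, hβ, div_eq_mul_inv]
      ring
  -- lower bound
  have hlb : ∀ c ∈ { c : ℝ | ∃ z : V → V → ℝ,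
      (∀ a b, 0 ≤ z a b) ∧ (∀ a, ∑ᶠ b, z a b = Pdist G u a) ∧
      (∀ b, ∑ᶠ a, z a b = Pdist G v b) ∧
      c = ∑ᶠ a, ∑ᶠ b, gdist G a b * z a b }, T ≤ c := by
    rintro c ⟨z, hz0, hrow, hcol, rfl⟩
    simp only [finsum_eq_sum_of_fintype] at hrow hcol ⊢
    set f : V → ℝ := fun x => max 0 (2 - (G.dist u x : ℝ)) with hf
    have hf_u : f u = 2 := by
      simp [hf, SimpleGraph.dist_self]
    have hf_v : f v = 1 := by
      simp [hf, hduv]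
      norm_num
    have hf_W : ∀ y ∈ W, f y = 0 := by
      intro y hy
      simp [hf, hdist2 y hy]
    have hLip : ∀ x y, f x - f y ≤ gdist G x y := by
      intro x y
      have hd0 : (0:ℝ) ≤ gdist G x y := Nat.cast_nonneg _
      have hfy : 2 - (G.dist u y : ℝ) ≤ f y := le_max_right _ _
      have hfy0 : 0 ≤ f y := le_max_left _ _
      by_cases hx : 2 - (G.dist u x : ℝ) ≤ 0
      · have hx0 : f x = 0 := max_eq_left hx
        linarith
      · have hfx : f x = 2 - (G.dist u x : ℝ) := max_eq_right (le_of_lt (not_le.mp hx))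
        have htri : (G.dist u y : ℝ) ≤ (G.dist u x : ℝ) + (G.dist x y : ℝ) := by
          exact_mod_cast hG.dist_triangle
        simp only [gdist]
        linarith
    have h1 : ∑ a, ∑ b, (f a - f b) * z a b ≤ ∑ a, ∑ b, gdist G a b * z a b :=
      Finset.sum_le_sum (fun a _ => Finset.sum_le_sum (fun b _ =>
        mul_le_mul_of_nonneg_right (hLip a b) (hz0 a b)))
    have h2 : ∑ a, ∑ b, (f a - f b) * z a b
        = ∑ a, f a * Pdist G u a - ∑ b, f b * Pdist G v b := by
      have hsub : ∀ a b : V, (f a - f b) * z a b = f a * z a b - f b * z a b :=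
        fun a b => by ring
      simp only [hsub, Finset.sum_sub_distrib]
      congr 1
      · exact Finset.sum_congr rfl (fun a _ => by rw [← Finset.mul_sum, hrow a])
      · rw [Finset.sum_comm]
        exact Finset.sum_congr rfl (fun b _ => by rw [← Finset.mul_sum, hcol b])
    have hμ : ∑ a, f a * Pdist G u a = 3 / 2 := by
      simp only [hPu, mul_add, mul_ite, mul_zero, Finset.sum_add_distrib,
        hsum_ite_eq (fun a => f a * 2⁻¹) u, hsum_ite_eq (fun a => f a * 2⁻¹) v]
      rw [hf_u, hf_v]
      norm_num
    have hν : ∑ b, f b * Pdist G v b = 3 * α := by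
      simp only [hPv, mul_add, mul_ite, mul_zero, Finset.sum_add_distrib,
        hsum_ite_eq (fun b => f b * α) u, hsum_ite_eq (fun b => f b * α) v]
      have hWzero : ∑ b, (if b ∈ W then f b * α else 0) = 0 := by
        rw [Finset.sum_ite_mem, Finset.univ_inter]
        exact Finset.sum_eq_zero (fun b hb => by rw [hf_W b hb, zero_mul])
      rw [hf_u, hf_v, hWzero]
      ring
    have hTval : T = 3 / 2 - 3 * α := by
      have e1 : T = 3 * (K * β) := by
        rw [hT, hβ, div_eq_mul_inv]
        ring
      linarith only [e1, hrowval]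
    calc T = 3 / 2 - 3 * α := hTval
      _ = (∑ a, f a * Pdist G u a) - ∑ b, f b * Pdist G v b := by rw [hμ, hν]
      _ = ∑ a, ∑ b, (f a - f b) * z a b := h2.symm
      _ ≤ ∑ a, ∑ b, gdist G a b * z a b := h1
  -- conclude
  have hE : EMD (gdist G) (Pdist G u) (Pdist G v) = T := by
    rw [EMD]
    exact le_antisymm (csInf_le ⟨T, fun c hc => hlb c hc⟩ hmemT)
      (le_csInf ⟨T, hmemT⟩ hlb)
  have hgoal1 : 3 * ((degC G v : ℝ) - 1) / (2 * ((degC G v : ℝ) + 1)) = T := by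
    rw [hKn, hT]
    ring
  constructor
  · rw [hE, hgoal1]
  · rw [ricci, hE, hT, hKn]
    exact ricci_arith K hK0

/-- Let `G` be a finite connected simple graph with at least two
vertices, let `u` be a vertex of degree 1 with unique neighbor `v`, and let
`d = deg_G(v)`. Then `EMD_{dist_G}(P_u, P_v) = 3(d − 1)/(2(d + 1))`; equivalently, the
Ollivier–Ricci curvature of the pendant edge `{u,v}` equals
`C_G({u,v}) = (5 − d)/(2(d + 1))`. -/
theorem emd_pendant_edge {V : Type} [Finite V] (G : SimpleGraph V) (hG : G.Connected)
    (hcard : 2 ≤ Nat.card V) (u v : V) (huv : G.Adj u v)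
    (huniq : ∀ w : V, G.Adj u w → w = v) :
    EMD (gdist G) (Pdist G u) (Pdist G v)
        = 3 * ((degC G v : ℝ) - 1) / (2 * ((degC G v : ℝ) + 1)) ∧
    ricci G u v = (5 - (degC G v : ℝ)) / (2 * ((degC G v : ℝ) + 1)) := by
  exact emd_pendant_edge_aux G hG hcard u v huv huniq
end

section
/- In the graph G_{q,k} (q ≥ 1, k ≥ 1), the edge f = {s,t} satisfies ‖f‖_TVD = 1/(q+3), and consequently its Ollivier–Ricci curvature satisfies C_{G_{q,k}}(f) ≥ 1 − 3/(q+3). (This is claim (i) in the proof of the paper's Theorem 1, with q playing the role of √n.) -/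
/-- Vertices of the complete 10-ary tree of depth `k`: lists over `Fin 10` of length
at most `k`, recording the (reversed) path from the root `[]`. -/
def TreeVert (k : ℕ) : Type := { l : List (Fin 10) // l.length ≤ k }

instance (k : ℕ) : DecidableEq (TreeVert k) :=
  inferInstanceAs (DecidableEq { l : List (Fin 10) // l.length ≤ k })

instance (k : ℕ) : Fintype (TreeVert k) :=
  Fintype.ofSurjective
    (fun x : Σ j : Fin (k + 1), List.Vector (Fin 10) j =>
      (⟨x.2.1, by have h1 := x.2.2; have h2 := x.1.isLt; omega⟩ : TreeVert k))
    (fun y => ⟨⟨⟨y.1.length, Nat.lt_succ_of_le y.2⟩, ⟨y.1, rfl⟩⟩, Subtype.ext rfl⟩)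

/-- The root of the tree. -/
def treeRoot (k : ℕ) : TreeVert k := ⟨[], by simp⟩

/-- The parent of a tree vertex (the root is mapped to itself). -/
def treeParent {k : ℕ} (x : TreeVert k) : TreeVert k :=
  ⟨x.1.tail, by have h1 := x.2; have h2 : x.1.tail.length = x.1.length - 1 := List.length_tail; omega⟩

/-- The vertex set of the graph `G_{q,k}`: the two special vertices `s`, `t`
(encoded as `Fin 2`), the vertices `p_1, …, p_q`, and the tree vertices. -/
abbrev GVert (q k : ℕ) : Type := (Fin 2 ⊕ Fin q) ⊕ TreeVert k

def vS (q k : ℕ) : GVert q k := Sum.inl (Sum.inl 0)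
def vT (q k : ℕ) : GVert q k := Sum.inl (Sum.inl 1)
def vP (q k : ℕ) (i : Fin q) : GVert q k := Sum.inl (Sum.inr i)
def vTr (q k : ℕ) (x : TreeVert k) : GVert q k := Sum.inr x

/-- Base adjacency relation generating the edges of `G_{q,k}`: the edge `{s,t}`,
the edges `{p_i, s}` and `{p_i, t}`, the bridge `{t, r_1}` to the root of the tree,
and the parent-child tree edges. -/
def gadjBase (q k : ℕ) : GVert q k → GVert q k → Prop := fun x y =>
  (x = vS q k ∧ y = vT q k) ∨
  (∃ i : Fin q, x = vP q k i ∧ (y = vS q k ∨ y = vT q k)) ∨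
  (x = vT q k ∧ y = vTr q k (treeRoot k)) ∨
  (∃ u v : TreeVert k, x = vTr q k u ∧ y = vTr q k v ∧ ∃ a : Fin 10, u.1 = a :: v.1)

/-- The graph `G_{q,k}` from the proof of the paper's Theorem 1
(with `q` playing the role of `√n`). -/
def Gqk (q k : ℕ) : SimpleGraph (GVert q k) := SimpleGraph.fromRel (gadjBase q k)

/-- `N_k = (10^(k+1) - 1)/9`, the number of vertices of the complete 10-ary tree of depth `k`. -/
def Nk (k : ℕ) : ℕ := (10 ^ (k + 1) - 1) / 9
section Helpers

open Classical

variable (q k : ℕ)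

@[simp] lemma vS_ne_vT : vS q k ≠ vT q k := by simp [vS, vT]
@[simp] lemma vP_ne_vS (i : Fin q) : vP q k i ≠ vS q k := by simp [vP, vS]
@[simp] lemma vP_ne_vT (i : Fin q) : vP q k i ≠ vT q k := by simp [vP, vT]
@[simp] lemma vTr_ne_vS (x : TreeVert k) : vTr q k x ≠ vS q k := by simp [vTr, vS]
@[simp] lemma vTr_ne_vT (x : TreeVert k) : vTr q k x ≠ vT q k := by simp [vTr, vT]
@[simp] lemma vTr_ne_vP (x : TreeVert k) (i : Fin q) : vTr q k x ≠ vP q k i := by simp [vTr, vP]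
@[simp] lemma vTr_inj (x y : TreeVert k) : vTr q k x = vTr q k y ↔ x = y := by simp [vTr]
@[simp] lemma vP_inj (i j : Fin q) : vP q k i = vP q k j ↔ i = j := by simp [vP]

lemma adj_vS_iff (x : GVert q k) :
    (Gqk q k).Adj (vS q k) x ↔ x = vT q k ∨ ∃ i, x = vP q k i := by
  rw [Gqk, SimpleGraph.fromRel_adj]
  constructor
  · rintro ⟨hne, h | h⟩
    · rcases h with ⟨-, h⟩ | ⟨i, h, -⟩ | ⟨h, -⟩ | ⟨u, v, h, -⟩
      · exact Or.inl h
      · exact absurd h (vP_ne_vS q k i).symm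
      · exact absurd h (vS_ne_vT q k)
      · exact absurd h (vTr_ne_vS q k u).symm
    · rcases h with ⟨-, h⟩ | ⟨i, h, hi⟩ | ⟨h, -⟩ | ⟨u, v, -, h, -⟩
      · exact absurd h (vS_ne_vT q k)
      · rcases hi with hi | hi
        · exact Or.inr ⟨i, h⟩
        · exact absurd hi (vS_ne_vT q k)
      · exact Or.inl h
      · exact absurd h (vTr_ne_vS q k v).symm
  · rintro (rfl | ⟨i, rfl⟩)
    · exact ⟨vS_ne_vT q k, Or.inl (Or.inl ⟨rfl, rfl⟩)⟩
    · exact ⟨(vP_ne_vS q k i).symm, Or.inr (Or.inr (Or.inl ⟨i, rfl, Or.inl rfl⟩))⟩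

lemma adj_vT_iff (x : GVert q k) :
    (Gqk q k).Adj (vT q k) x ↔
      x = vS q k ∨ (∃ i, x = vP q k i) ∨ x = vTr q k (treeRoot k) := by
  rw [Gqk, SimpleGraph.fromRel_adj]
  constructor
  · rintro ⟨hne, h | h⟩
    · rcases h with ⟨h, -⟩ | ⟨i, h, -⟩ | ⟨-, h⟩ | ⟨u, v, h, -⟩
      · exact absurd h (vS_ne_vT q k).symm
      · exact absurd h (vP_ne_vT q k i).symm
      · exact Or.inr (Or.inr h)
      · exact absurd h (vTr_ne_vT q k u).symm
    · rcases h with ⟨h, -⟩ | ⟨i, h, -⟩ | ⟨-, h⟩ | ⟨u, v, -, h, -⟩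
      · exact Or.inl h
      · exact Or.inr (Or.inl ⟨i, h⟩)
      · exact absurd h (vTr_ne_vT q k (treeRoot k)).symm
      · exact absurd h (vTr_ne_vT q k v).symm
  · rintro (rfl | ⟨i, rfl⟩ | rfl)
    · exact ⟨(vS_ne_vT q k).symm, Or.inr (Or.inl ⟨rfl, rfl⟩)⟩
    · exact ⟨(vP_ne_vT q k i).symm, Or.inr (Or.inr (Or.inl ⟨i, rfl, Or.inr rfl⟩))⟩
    · exact ⟨(vTr_ne_vT q k (treeRoot k)).symm, Or.inl (Or.inr (Or.inr (Or.inl ⟨rfl, rfl⟩)))⟩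


lemma vP_injective : Function.Injective (vP q k) := fun i j h => by simpa [vP] using h

lemma degC_vS : degC (Gqk q k) (vS q k) = q + 1 := by
  have hset : {x | (Gqk q k).Adj (vS q k) x}
      = ↑(insert (vT q k) (Finset.univ.image (vP q k))) := by
    ext x
    simp only [Set.mem_setOf_eq, adj_vS_iff, Finset.coe_insert, Set.mem_insert_iff,
      Finset.coe_image, Set.mem_image, Finset.mem_coe, Finset.mem_univ, true_and]
    constructor
    · rintro (h | ⟨i, h⟩)
      · exact Or.inl h
      · exact Or.inr ⟨i, h.symm⟩
    · rintro (h | ⟨i, h⟩)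
      · exact Or.inl h
      · exact Or.inr ⟨i, h.symm⟩
  rw [degC, hset, Nat.card_coe_set_eq, Set.ncard_coe_finset,
    Finset.card_insert_of_notMem (by simp [vT, vP]),
    Finset.card_image_of_injective _ (vP_injective q k),
    Finset.card_univ, Fintype.card_fin]

lemma degC_vT : degC (Gqk q k) (vT q k) = q + 2 := by
  have hset : {x | (Gqk q k).Adj (vT q k) x}
      = ↑(insert (vS q k) (insert (vTr q k (treeRoot k)) (Finset.univ.image (vP q k)))) := by
    ext x
    simp only [Set.mem_setOf_eq, adj_vT_iff, Finset.coe_insert, Set.mem_insert_iff,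
      Finset.coe_image, Set.mem_image, Finset.mem_coe, Finset.mem_univ, true_and]
    constructor
    · rintro (h | ⟨i, h⟩ | h)
      · exact Or.inl h
      · exact Or.inr (Or.inr ⟨i, h.symm⟩)
      · exact Or.inr (Or.inl h)
    · rintro (h | h | ⟨i, h⟩)
      · exact Or.inl h
      · exact Or.inr (Or.inr h)
      · exact Or.inr (Or.inl ⟨i, h.symm⟩)
  rw [degC, hset, Nat.card_coe_set_eq, Set.ncard_coe_finset,
    Finset.card_insert_of_notMem (by simp [vS, vTr, vP]),
    Finset.card_insert_of_notMem (by simp [vT, vTr, vP]),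
    Finset.card_image_of_injective _ (vP_injective q k),
    Finset.card_univ, Fintype.card_fin]

lemma PdistS (w : GVert q k) :
    Pdist (Gqk q k) (vS q k) w
      = if w = vS q k ∨ w = vT q k ∨ ∃ i, w = vP q k i then ((q : ℝ) + 2)⁻¹ else 0 := by
  rw [Pdist, degC_vS]
  have hiff : (w = vS q k ∨ (Gqk q k).Adj (vS q k) w)
      ↔ (w = vS q k ∨ w = vT q k ∨ ∃ i, w = vP q k i) := by
    rw [adj_vS_iff]
  by_cases hw : w = vS q k ∨ w = vT q k ∨ ∃ i, w = vP q k i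
  · rw [if_pos (hiff.mpr hw), if_pos hw]; push_cast; ring_nf
  · rw [if_neg (fun h => hw (hiff.mp h)), if_neg hw]

lemma PdistT (w : GVert q k) :
    Pdist (Gqk q k) (vT q k) w
      = if w = vS q k ∨ w = vT q k ∨ (∃ i, w = vP q k i) ∨ w = vTr q k (treeRoot k)
        then ((q : ℝ) + 3)⁻¹ else 0 := by
  rw [Pdist, degC_vT]
  have hiff : (w = vT q k ∨ (Gqk q k).Adj (vT q k) w)
      ↔ (w = vS q k ∨ w = vT q k ∨ (∃ i, w = vP q k i) ∨ w = vTr q k (treeRoot k)) := by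
    rw [adj_vT_iff]; tauto
  by_cases hw : w = vS q k ∨ w = vT q k ∨ (∃ i, w = vP q k i) ∨ w = vTr q k (treeRoot k)
  · rw [if_pos (hiff.mpr hw), if_pos hw]; push_cast; ring_nf
  · rw [if_neg (fun h => hw (hiff.mp h)), if_neg hw]

lemma sum_gvert (g : GVert q k → ℝ) :
    ∑ x, g x = g (vS q k) + g (vT q k) + (∑ i, g (vP q k i)) + ∑ x, g (vTr q k x) := by
  rw [Fintype.sum_sum_type, Fintype.sum_sum_type, Fin.sum_univ_two]
  rfl
lemma two_point_sum {α : Type} [Fintype α] [DecidableEq α] (u w : α) (h : u ≠ w) (b c : ℝ) :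
    ∑ v, (if v = u then b else if v = w then c else 0) = b + c := by
  have hpt : ∀ v, (if v = u then b else if v = w then c else 0)
      = (if v = u then b else 0) + (if v = w then c else 0) := by
    intro v
    by_cases h1 : v = u
    · subst h1; simp [h]
    · simp [h1]
  simp only [hpt, Finset.sum_add_distrib, Fintype.sum_ite_eq']

lemma hab_nonneg : (0:ℝ) ≤ ((q : ℝ) + 2)⁻¹ - ((q : ℝ) + 3)⁻¹ := by
  rw [sub_nonneg]
  gcongr
  · linarith

lemma tvd_eval : tvd (Gqk q k) (vS q k) (vT q k) = 1 / ((q : ℝ) + 3) := by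
  classical
  have hS : |Pdist (Gqk q k) (vS q k) (vS q k) - Pdist (Gqk q k) (vT q k) (vS q k)|
      = ((q : ℝ) + 2)⁻¹ - ((q : ℝ) + 3)⁻¹ := by
    rw [PdistS, PdistT, if_pos (Or.inl rfl), if_pos (Or.inl rfl)]
    exact abs_of_nonneg (hab_nonneg q)
  have hT : |Pdist (Gqk q k) (vS q k) (vT q k) - Pdist (Gqk q k) (vT q k) (vT q k)|
      = ((q : ℝ) + 2)⁻¹ - ((q : ℝ) + 3)⁻¹ := by
    rw [PdistS, PdistT, if_pos (Or.inr (Or.inl rfl)), if_pos (Or.inr (Or.inl rfl))]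
    exact abs_of_nonneg (hab_nonneg q)
  have hP : ∀ i : Fin q,
      |Pdist (Gqk q k) (vS q k) (vP q k i) - Pdist (Gqk q k) (vT q k) (vP q k i)|
        = ((q : ℝ) + 2)⁻¹ - ((q : ℝ) + 3)⁻¹ := by
    intro i
    rw [PdistS, PdistT, if_pos (Or.inr (Or.inr ⟨i, rfl⟩)),
      if_pos (Or.inr (Or.inr (Or.inl ⟨i, rfl⟩)))]
    exact abs_of_nonneg (hab_nonneg q)
  have hTr : ∀ x : TreeVert k,
      |Pdist (Gqk q k) (vS q k) (vTr q k x) - Pdist (Gqk q k) (vT q k) (vTr q k x)|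
        = if x = treeRoot k then ((q : ℝ) + 3)⁻¹ else 0 := by
    intro x
    rw [PdistS, PdistT, if_neg (by simp)]
    by_cases hx : x = treeRoot k
    · subst hx
      rw [if_pos (Or.inr (Or.inr (Or.inr rfl))), if_pos rfl, zero_sub, abs_neg,
        abs_of_nonneg (by positivity)]
    · rw [if_neg (by simp [hx]), if_neg hx]
      simp
  have hq3 : ((q : ℝ) + 3) ≠ 0 := by positivity
  have hq2 : ((q : ℝ) + 2) ≠ 0 := by positivity
  rw [tvd, finsum_eq_sum_of_fintype,
    sum_gvert q k (fun w => |Pdist (Gqk q k) (vS q k) w - Pdist (Gqk q k) (vT q k) w|),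
    hS, hT]
  simp only [hP, hTr, Finset.sum_const, Finset.card_univ, Fintype.card_fin, nsmul_eq_mul,
    Fintype.sum_ite_eq']
  field_simp
  ring
lemma sum_indicatorA (c : ℝ) :
    ∑ u : GVert q k,
      (if u = vS q k ∨ u = vT q k ∨ ∃ i, u = vP q k i then c else 0) = ((q : ℝ) + 2) * c := by
  classical
  rw [sum_gvert q k (fun u => if u = vS q k ∨ u = vT q k ∨ ∃ i, u = vP q k i then c else 0)]
  have h1 : ∀ i : Fin q,
      (if vP q k i = vS q k ∨ vP q k i = vT q k ∨ ∃ j, vP q k i = vP q k j then c else 0) = c :=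
    fun i => if_pos (Or.inr (Or.inr ⟨i, rfl⟩))
  have h2 : ∀ x : TreeVert k,
      (if vTr q k x = vS q k ∨ vTr q k x = vT q k ∨ ∃ j, vTr q k x = vP q k j then c else 0)
        = 0 := fun x => if_neg (by simp)
  rw [if_pos (Or.inl rfl), if_pos (Or.inr (Or.inl rfl))]
  simp only [h1, h2, Finset.sum_const, Finset.card_univ, Fintype.card_fin, nsmul_eq_mul,
    Finset.sum_const_zero]
  ring

lemma emd_le :
    EMD (gdist (Gqk q k)) (Pdist (Gqk q k) (vS q k)) (Pdist (Gqk q k) (vT q k))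
      ≤ 3 / ((q : ℝ) + 3) := by
  classical
  have hq2 : (0:ℝ) < (q : ℝ) + 2 := by positivity
  have hq3 : (0:ℝ) < (q : ℝ) + 3 := by positivity
  set b : ℝ := ((q : ℝ) + 3)⁻¹ with hb
  set c : ℝ := (((q : ℝ) + 2) * ((q : ℝ) + 3))⁻¹ with hc
  have hbpos : (0:ℝ) ≤ b := by rw [hb]; positivity
  have hcpos : (0:ℝ) ≤ c := by rw [hc]; positivity
  set z : GVert q k → GVert q k → ℝ := fun u v =>
    if u = vS q k ∨ u = vT q k ∨ ∃ i, u = vP q k i then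
      (if v = u then b else if v = vTr q k (treeRoot k) then c else 0) else 0 with hz
  have hA_rt : ∀ u : GVert q k, (u = vS q k ∨ u = vT q k ∨ ∃ i, u = vP q k i) →
      u ≠ vTr q k (treeRoot k) := by
    rintro u (rfl | rfl | ⟨i, rfl⟩)
    exacts [(vTr_ne_vS q k _).symm, (vTr_ne_vT q k _).symm, (vTr_ne_vP q k _ i).symm]
  have hz_nonneg : ∀ u v, 0 ≤ z u v := by
    intro u v
    simp only [hz]
    split_ifs <;> first | exact hbpos | exact hcpos | exact le_refl 0
  -- row sums
  have hrow : ∀ u, ∑ v, z u v = Pdist (Gqk q k) (vS q k) u := by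
    intro u
    by_cases hu : u = vS q k ∨ u = vT q k ∨ ∃ i, u = vP q k i
    · have h1 : ∀ v, z u v = (if v = u then b else if v = vTr q k (treeRoot k) then c else 0) :=
        fun v => by simp only [hz]; rw [if_pos hu]
      rw [PdistS, if_pos hu]
      simp only [h1]
      rw [two_point_sum u (vTr q k (treeRoot k)) (hA_rt u hu) b c, hb, hc]
      field_simp
      ring
    · have h1 : ∀ v, z u v = 0 := fun v => by simp only [hz]; rw [if_neg hu]
      rw [PdistS, if_neg hu]
      simp only [h1, Finset.sum_const_zero]
  -- column sums
  have hcol : ∀ v, ∑ u, z u v = Pdist (Gqk q k) (vT q k) v := by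
    intro v
    by_cases hv : v = vTr q k (treeRoot k)
    · subst hv
      rw [PdistT, if_pos (Or.inr (Or.inr (Or.inr rfl)))]
      have hpt : ∀ u, z u (vTr q k (treeRoot k))
          = (if u = vS q k ∨ u = vT q k ∨ ∃ i, u = vP q k i then c else 0) := by
        intro u
        by_cases hu : u = vS q k ∨ u = vT q k ∨ ∃ i, u = vP q k i
        · simp only [hz]
          rw [if_pos hu, if_pos hu, if_neg (fun h => (hA_rt u hu) h.symm)]
          simp
        · simp only [hz]; rw [if_neg hu, if_neg hu]
      simp only [hpt]
      rw [sum_indicatorA q k c, hc]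
      field_simp
    · by_cases hv2 : v = vS q k ∨ v = vT q k ∨ ∃ i, v = vP q k i
      · have hv4 : v = vS q k ∨ v = vT q k ∨ (∃ i, v = vP q k i)
            ∨ v = vTr q k (treeRoot k) := by tauto
        rw [PdistT, if_pos hv4]
        have hpt : ∀ u, z u v = if u = v then b else 0 := by
          intro u
          by_cases hu : u = vS q k ∨ u = vT q k ∨ ∃ i, u = vP q k i
          · simp only [hz]
            rw [if_pos hu]
            by_cases h1 : v = u
            · rw [if_pos h1, if_pos h1.symm]
            · rw [if_neg h1, if_neg hv, if_neg (fun h => h1 h.symm)]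
          · simp only [hz]
            rw [if_neg hu, if_neg (fun h : u = v => hu (by rw [h]; exact hv2))]
        simp only [hpt, Fintype.sum_ite_eq', hb]
      · rw [PdistT, if_neg (by
          rintro (h | h | h | h)
          exacts [hv2 (Or.inl h), hv2 (Or.inr (Or.inl h)), hv2 (Or.inr (Or.inr h)), hv h])]
        have hpt : ∀ u, z u v = 0 := by
          intro u
          by_cases hu : u = vS q k ∨ u = vT q k ∨ ∃ i, u = vP q k i
          · simp only [hz]
            rw [if_pos hu, if_neg (fun h : v = u => hv2 (by rw [h]; exact hu)), if_neg hv]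
          · simp only [hz]; rw [if_neg hu]
        simp only [hpt, Finset.sum_const_zero]
  -- distance bounds
  have hST : (Gqk q k).Adj (vS q k) (vT q k) := (adj_vS_iff q k _).mpr (Or.inl rfl)
  have hTrt : (Gqk q k).Adj (vT q k) (vTr q k (treeRoot k)) :=
    (adj_vT_iff q k _).mpr (Or.inr (Or.inr rfl))
  have hPT : ∀ i, (Gqk q k).Adj (vP q k i) (vT q k) :=
    fun i => ((adj_vT_iff q k _).mpr (Or.inr (Or.inl ⟨i, rfl⟩))).symm
  have hdist : ∀ u : GVert q k, (u = vS q k ∨ u = vT q k ∨ ∃ i, u = vP q k i) →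
      gdist (Gqk q k) u (vTr q k (treeRoot k)) ≤ 2 := by
    have key : ∀ u : GVert q k, (Gqk q k).dist u (vTr q k (treeRoot k)) ≤ 2 →
        gdist (Gqk q k) u (vTr q k (treeRoot k)) ≤ 2 := by
      intro u h
      rw [gdist]
      exact_mod_cast h
    rintro u (rfl | rfl | ⟨i, rfl⟩)
    · exact key _ ((SimpleGraph.dist_le
        (SimpleGraph.Walk.cons hST (SimpleGraph.Walk.cons hTrt SimpleGraph.Walk.nil))).trans
        (by simp))
    · exact key _ ((SimpleGraph.dist_le
        (SimpleGraph.Walk.cons hTrt SimpleGraph.Walk.nil)).trans (by simp))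
    · exact key _ ((SimpleGraph.dist_le
        (SimpleGraph.Walk.cons (hPT i) (SimpleGraph.Walk.cons hTrt SimpleGraph.Walk.nil))).trans
        (by simp))
  -- inner cost bound
  have hinner : ∀ u : GVert q k, ∑ v, gdist (Gqk q k) u v * z u v
      ≤ (if u = vS q k ∨ u = vT q k ∨ ∃ i, u = vP q k i then 2 * c else 0) := by
    intro u
    by_cases hu : u = vS q k ∨ u = vT q k ∨ ∃ i, u = vP q k i
    · rw [if_pos hu]
      have hpt : ∀ v, gdist (Gqk q k) u v * z u v
          ≤ (if v = vTr q k (treeRoot k) then 2 * c else 0) := by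
        intro v
        simp only [hz]
        rw [if_pos hu]
        by_cases h1 : v = u
        · rw [if_pos h1, h1, if_neg (hA_rt u hu)]
          simp [gdist, SimpleGraph.dist_self]
        · by_cases h2 : v = vTr q k (treeRoot k)
          · subst h2
            rw [if_neg h1, if_pos rfl, if_pos rfl]
            exact mul_le_mul_of_nonneg_right (hdist u hu) hcpos
          · rw [if_neg h1, if_neg h2, if_neg h2, mul_zero]
      calc ∑ v, gdist (Gqk q k) u v * z u v
          ≤ ∑ v, (if v = vTr q k (treeRoot k) then 2 * c else 0) :=
            Finset.sum_le_sum (fun v _ => hpt v)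
        _ = 2 * c := by rw [Fintype.sum_ite_eq']
    · rw [if_neg hu]
      have hpt : ∀ v, gdist (Gqk q k) u v * z u v = 0 := by
        intro v
        simp only [hz]
        rw [if_neg hu, mul_zero]
      simp only [hpt, Finset.sum_const_zero]
      exact le_refl 0
  -- membership and conclusion
  have hbdd : BddBelow { x : ℝ | ∃ w : GVert q k → GVert q k → ℝ,
      (∀ u v, 0 ≤ w u v) ∧ (∀ u, ∑ᶠ v, w u v = Pdist (Gqk q k) (vS q k) u) ∧
      (∀ v, ∑ᶠ u, w u v = Pdist (Gqk q k) (vT q k) v) ∧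
      x = ∑ᶠ u, ∑ᶠ v, gdist (Gqk q k) u v * w u v } := by
    refine ⟨0, ?_⟩
    rintro x ⟨w, hw0, -, -, rfl⟩
    simp only [finsum_eq_sum_of_fintype]
    refine Finset.sum_nonneg fun u _ => Finset.sum_nonneg fun v _ => mul_nonneg ?_ (hw0 u v)
    rw [gdist]
    positivity
  have hmem : (∑ᶠ u, ∑ᶠ v, gdist (Gqk q k) u v * z u v) ∈ { x : ℝ |
      ∃ w : GVert q k → GVert q k → ℝ,
      (∀ u v, 0 ≤ w u v) ∧ (∀ u, ∑ᶠ v, w u v = Pdist (Gqk q k) (vS q k) u) ∧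
      (∀ v, ∑ᶠ u, w u v = Pdist (Gqk q k) (vT q k) v) ∧
      x = ∑ᶠ u, ∑ᶠ v, gdist (Gqk q k) u v * w u v } :=
    ⟨z, hz_nonneg, fun u => by rw [finsum_eq_sum_of_fintype]; exact hrow u,
      fun v => by rw [finsum_eq_sum_of_fintype]; exact hcol v, rfl⟩
  have hle := csInf_le hbdd hmem
  rw [EMD]
  refine le_trans hle ?_
  have hcost : (∑ᶠ u, ∑ᶠ v, gdist (Gqk q k) u v * z u v)
      ≤ ((q : ℝ) + 2) * (2 * c) := by
    simp only [finsum_eq_sum_of_fintype]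
    calc ∑ u, ∑ v, gdist (Gqk q k) u v * z u v
        ≤ ∑ u : GVert q k,
            (if u = vS q k ∨ u = vT q k ∨ ∃ i, u = vP q k i then 2 * c else 0) :=
          Finset.sum_le_sum (fun u _ => hinner u)
      _ = ((q : ℝ) + 2) * (2 * c) := sum_indicatorA q k (2 * c)
  refine le_trans hcost ?_
  rw [hc, div_eq_mul_inv]
  rw [show ((q : ℝ) + 2) * (2 * (((q : ℝ) + 2) * ((q : ℝ) + 3))⁻¹)
      = 2 * ((q : ℝ) + 3)⁻¹ by field_simp]
  have : (0:ℝ) ≤ ((q : ℝ) + 3)⁻¹ := by positivity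
  linarith

end Helpers


/-- In the graph `G_{q,k}` (`q ≥ 1`, `k ≥ 1`), the edge `f = {s,t}`
satisfies `‖f‖_TVD = 1/(q+3)`, and consequently its Ollivier–Ricci curvature satisfies
`C_{G_{q,k}}(f) ≥ 1 − 3/(q+3)`. -/
theorem tvd_st_edge (q k : ℕ) (hq : 1 ≤ q) (hk : 1 ≤ k) :
    tvd (Gqk q k) (vS q k) (vT q k) = 1 / ((q : ℝ) + 3) ∧
    1 - 3 / ((q : ℝ) + 3) ≤ ricci (Gqk q k) (vS q k) (vT q k) := by
  refine ⟨tvd_eval q k, ?_⟩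
  rw [ricci]
  have h := emd_le q k
  linarith
end

section
/- In the graph G_{q,k} (q ≥ 1, k ≥ 1), every tree edge of H_2 joining a leaf r_i to its parent r_j satisfies EMD_{dist}(P_{r_i}, P_{r_j}) = 5/4, i.e., C_{G_{q,k}}({r_i,r_j}) = −1/4 (the parent of a leaf has degree 11); consequently the sum Λ₃ of the curvatures over all 10^k leaf edges equals −10^k/4. (This is the corrected form of claim (iv) in the proof of the paper's Theorem 1.) -/
section LeafProof

open Finset SimpleGraph

variable {q k : ℕ}

lemma vTr_inj_s6 : Function.Injective (vTr q k) := fun a b h => by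
  simpa [vTr] using h

lemma gqk_adj {a b : GVert q k} :
    (Gqk q k).Adj a b ↔ a ≠ b ∧ (gadjBase q k a b ∨ gadjBase q k b a) :=
  SimpleGraph.fromRel_adj _ _ _

lemma adj_leaf (hk : 1 ≤ k) (x : TreeVert k) (hx : x.1.length = k) (w : GVert q k) :
    (Gqk q k).Adj (vTr q k x) w ↔ w = vTr q k (treeParent x) := by
  obtain ⟨a, l, hal⟩ : ∃ a l, x.1 = a :: l := by
    rcases h : x.1 with _ | ⟨a, l⟩
    · exact absurd hx (by rw [h]; simp; omega)
    · exact ⟨a, l, rfl⟩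
  have htp : (treeParent x).1 = l := by simp [treeParent, hal]
  constructor
  · rw [gqk_adj]
    rintro ⟨hne, h | h⟩
    · rcases h with ⟨h1, -⟩ | ⟨i, h1, -⟩ | ⟨h1, -⟩ | ⟨u, v, h1, h2, a', ha'⟩
      · exact absurd h1 (by simp [vTr, vS])
      · exact absurd h1 (by simp [vTr, vP])
      · exact absurd h1 (by simp [vTr, vT])
      · have hu : u = x := vTr_inj_s6 h1.symm
        subst hu
        subst h2
        congr 1
        apply Subtype.ext
        rw [htp]
        have h3 : a' :: v.1 = a :: l := ha'.symm.trans hal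
        exact (List.cons.injEq _ _ _ _ ▸ h3).2
    · rcases h with ⟨h1, h2⟩ | ⟨i, h1, h2⟩ | ⟨h1, h2⟩ | ⟨u, v, h1, h2, a', ha'⟩
      · exact absurd h2 (by simp [vTr, vT])
      · rcases h2 with h2 | h2 <;> simp [vTr, vS, vT] at h2
      · exfalso
        have h3 : x = treeRoot k := vTr_inj_s6 h2
        have h4 : x.1.length = 0 := by rw [h3]; rfl
        omega
      · have hv : v = x := (vTr_inj_s6 h2).symm
        subst hv
        exfalso
        have h5 := u.2
        rw [ha'] at h5
        simp [hx] at h5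
  · rintro rfl
    rw [gqk_adj]
    constructor
    · intro h
      have h1 : x.1 = (treeParent x).1 := congrArg Subtype.val (vTr_inj_s6 h)
      rw [hal, htp] at h1
      exact absurd (congrArg List.length h1) (by simp)
    · refine Or.inl (Or.inr (Or.inr (Or.inr ⟨x, treeParent x, rfl, rfl, a, ?_⟩)))
      rw [hal, htp]

def pnbhd (q : ℕ) {k : ℕ} (l : List (Fin 10)) (hl : l.length + 1 = k) : Finset (GVert q k) :=
  insert
    (if h : l = [] then vT q k
     else vTr q k ⟨l.tail, by have : l.tail.length = l.length - 1 := List.length_tail; omega⟩)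
    (Finset.univ.image fun b : Fin 10 => vTr q k ⟨b :: l, by simp; omega⟩)

lemma adj_parent (l : List (Fin 10)) (hl : l.length + 1 = k) (hlk : l.length ≤ k)
    (w : GVert q k) :
    (Gqk q k).Adj (vTr q k ⟨l, hlk⟩) w ↔ w ∈ pnbhd q l hl := by
  constructor
  · rw [gqk_adj]
    rintro ⟨hne, h | h⟩
    · rcases h with ⟨h1, -⟩ | ⟨i, h1, -⟩ | ⟨h1, -⟩ | ⟨u, v, h1, h2, a', ha'⟩
      · exact absurd h1 (by simp [vTr, vS])
      · exact absurd h1 (by simp [vTr, vP])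
      · exact absurd h1 (by simp [vTr, vT])
      · have hu : u = ⟨l, hlk⟩ := vTr_inj_s6 h1.symm
        subst hu
        have ha2 : l = a' :: v.1 := ha'
        have hlnil : l ≠ [] := by rw [ha2]; simp
        rw [pnbhd]
        refine Finset.mem_insert.2 (Or.inl ?_)
        rw [dif_neg hlnil, h2]
        congr 1
        apply Subtype.ext
        show v.1 = l.tail
        rw [ha2, List.tail_cons]
    · rcases h with ⟨h1, h2⟩ | ⟨i, h1, h2⟩ | ⟨h1, h2⟩ | ⟨u, v, h1, h2, a', ha'⟩
      · exact absurd h2 (by simp [vTr, vT])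
      · rcases h2 with h2 | h2 <;> simp [vTr, vS, vT] at h2
      · have h3 : l = [] := congrArg Subtype.val (vTr_inj_s6 h2)
        rw [pnbhd]
        refine Finset.mem_insert.2 (Or.inl ?_)
        rw [dif_pos h3, h1]
      · have hv : v = ⟨l, hlk⟩ := (vTr_inj_s6 h2).symm
        subst hv
        rw [pnbhd]
        refine Finset.mem_insert.2 (Or.inr (Finset.mem_image.2 ⟨a', Finset.mem_univ _, ?_⟩))
        rw [h1]
        congr 1
        exact Subtype.ext ha'.symm
  · intro hw
    rw [pnbhd] at hw
    rcases Finset.mem_insert.1 hw with hw | hw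
    · by_cases hnil : l = []
      · rw [dif_pos hnil] at hw
        subst hw
        rw [gqk_adj]
        refine ⟨by simp [vTr, vT], Or.inr (Or.inr (Or.inr (Or.inl ⟨rfl, ?_⟩)))⟩
        exact congrArg (vTr q k) (Subtype.ext hnil)
      · rw [dif_neg hnil] at hw
        subst hw
        rw [gqk_adj]
        constructor
        · intro h
          have h1 : l = l.tail := congrArg Subtype.val (vTr_inj_s6 h)
          have h2 := congrArg List.length h1
          rw [List.length_tail] at h2
          have h3 : 1 ≤ l.length := List.length_pos_iff.2 hnil
          omega
        · refine Or.inl (Or.inr (Or.inr (Or.inr ⟨⟨l, hlk⟩, _, rfl, rfl, l.head hnil, ?_⟩)))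
          exact (List.cons_head_tail hnil).symm
    · obtain ⟨b, -, rfl⟩ := Finset.mem_image.1 hw
      rw [gqk_adj]
      constructor
      · intro h
        have h1 : l = b :: l := congrArg Subtype.val (vTr_inj_s6 h)
        exact absurd (congrArg List.length h1) (by simp)
      · exact Or.inr (Or.inr (Or.inr (Or.inr ⟨⟨b :: l, by simp; omega⟩, ⟨l, hlk⟩, rfl, rfl, b, rfl⟩)))

lemma reach_tree (q : ℕ) {k : ℕ} : ∀ (l : List (Fin 10)) (h : l.length ≤ k),
    (Gqk q k).Reachable (vT q k) (vTr q k ⟨l, h⟩)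
  | [], h => SimpleGraph.Adj.reachable (by
      rw [gqk_adj]
      exact ⟨by simp [vT, vTr], Or.inl (Or.inr (Or.inr (Or.inl
        ⟨rfl, congrArg (vTr q k) (Subtype.ext rfl)⟩)))⟩)
  | b :: l, h => by
      have hl : l.length ≤ k := by simp at h; omega
      refine (reach_tree q l hl).trans (SimpleGraph.Adj.reachable ?_)
      rw [gqk_adj]
      constructor
      · intro hcontra
        have h1 : l = b :: l := congrArg Subtype.val (vTr_inj_s6 hcontra)
        exact absurd (congrArg List.length h1) (by simp)
      · exact Or.inr (Or.inr (Or.inr (Or.inr ⟨⟨b :: l, h⟩, ⟨l, hl⟩, rfl, rfl, b, rfl⟩)))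

lemma reach_all (q : ℕ) {k : ℕ} (v : GVert q k) : (Gqk q k).Reachable (vT q k) v := by
  rcases v with (i | i) | x
  · fin_cases i
    · exact (SimpleGraph.Adj.reachable (by
        rw [gqk_adj]
        exact ⟨by simp [vS, vT], Or.inl (Or.inl ⟨rfl, rfl⟩)⟩)).symm
    · rfl
  · exact (SimpleGraph.Adj.reachable (by
      rw [gqk_adj]
      exact ⟨by simp [vP, vT], Or.inl (Or.inr (Or.inl ⟨i, rfl, Or.inr rfl⟩))⟩)).symm
  · rcases x with ⟨l, hlen⟩
    exact reach_tree q l hlen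

lemma finsum_fintype_eq {α : Type} [Fintype α] (f : α → ℝ) : ∑ᶠ a, f a = ∑ a, f a :=
  finsum_eq_sum_of_fintype f

set_option maxHeartbeats 2000000 in
lemma leaf_core (q : ℕ) {k : ℕ} (hk : 1 ≤ k) (x : TreeVert k) (hx : x.1.length = k) :
    degC (Gqk q k) (vTr q k (treeParent x)) = 11 ∧
    EMD (gdist (Gqk q k)) (Pdist (Gqk q k) (vTr q k x))
        (Pdist (Gqk q k) (vTr q k (treeParent x))) = 5 / 4 := by
  obtain ⟨a, l, hal⟩ : ∃ a l, x.1 = a :: l := by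
    rcases h : x.1 with _ | ⟨a, l⟩
    · exact absurd hx (by rw [h]; simp; omega)
    · exact ⟨a, l, rfl⟩
  have hl : l.length + 1 = k := by
    have := hx; rw [hal] at this; simpa using this
  have hlk : l.length ≤ k := by omega
  have hpx : treeParent x = ⟨l, hlk⟩ := Subtype.ext (by simp [treeParent, hal])
  rw [hpx]
  set G := Gqk q k with hG
  set X := vTr q k x with hX
  set P := vTr q k (⟨l, hlk⟩ : TreeVert k) with hP
  set N := pnbhd q l hl with hN
  set NP := insert P N with hNP
  set S := N.erase X with hS
  have hadjX : ∀ w, G.Adj X w ↔ w = P := by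
    intro w
    rw [hX, hG]
    rw [adj_leaf hk x hx w, hpx]
  have hadjP : ∀ w, G.Adj P w ↔ w ∈ N := fun w => adj_parent l hl hlk w
  have hne_len : ∀ (u v : TreeVert k), u.1.length ≠ v.1.length → vTr q k u ≠ vTr q k v :=
    fun u v h e => h (by rw [vTr_inj_s6 e])
  have hXP : X ≠ P := by
    rw [hX, hP]
    refine hne_len _ _ ?_
    rw [hal]; simp
  have hXN : X ∈ N := by
    rw [hN, pnbhd]
    refine Finset.mem_insert_of_mem (Finset.mem_image.2 ⟨a, Finset.mem_univ _, ?_⟩)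
    rw [hX]
    congr 1
    exact Subtype.ext hal.symm
  have hPN : P ∉ N := by
    rw [hN, pnbhd, hP]
    simp only [Finset.mem_insert, Finset.mem_image, not_or, not_exists]
    constructor
    · by_cases hnil : l = []
      · rw [dif_pos hnil]; simp [vTr, vT]
      · rw [dif_neg hnil]
        intro hcontra
        have h1 : l = l.tail := congrArg Subtype.val (vTr_inj_s6 hcontra)
        have h2 := congrArg List.length h1
        have h3 : 1 ≤ l.length := List.length_pos_iff.2 hnil
        rw [List.length_tail] at h2
        omega
    · intro b hcontra
      have h1 : (b :: l : List (Fin 10)) = l := congrArg Subtype.val (vTr_inj_s6 hcontra.2)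
      exact absurd (congrArg List.length h1) (by simp)
  have hNcard : N.card = 11 := by
    rw [hN, pnbhd, Finset.card_insert_of_notMem, Finset.card_image_of_injective _
      (fun b1 b2 hb => by
        have := congrArg Subtype.val (vTr_inj_s6 hb)
        exact (List.cons.injEq _ _ _ _ ▸ this).1)]
    · simp
    · simp only [Finset.mem_image, not_exists]
      intro b hcontra
      by_cases hnil : l = []
      · rw [dif_pos hnil] at hcontra
        exact absurd hcontra.2 (by simp [vTr, vT])
      · rw [dif_neg hnil] at hcontra
        have h1 : (b :: l : List (Fin 10)) = l.tail := congrArg Subtype.val (vTr_inj_s6 hcontra.2)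
        have h2 := congrArg List.length h1
        have h3 : 1 ≤ l.length := List.length_pos_iff.2 hnil
        rw [List.length_tail] at h2
        simp at h2
        omega
  have hScard : S.card = 10 := by rw [hS, Finset.card_erase_of_mem hXN, hNcard]
  have hXS : X ∉ S := Finset.notMem_erase _ _
  have hPS : P ∉ S := fun h => hPN (Finset.mem_of_mem_erase h)
  have hdegX : degC G X = 1 := by
    have hset : {w | G.Adj X w} = {P} := Set.ext fun w => by simp [hadjX w]
    rw [degC, hset]
    simp
  have hdegP : degC G P = 11 := by
    have hset : {w | G.Adj P w} = ↑N := Set.ext fun w => by simp [hadjP w]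
    rw [degC, hset, Nat.card_coe_set_eq, Set.ncard_coe_finset, hNcard]
  refine ⟨hdegP, ?_⟩
  have hmu : ∀ w, Pdist G X w = if w = X ∨ w = P then (1:ℝ)/2 else 0 := by
    intro w
    rw [Pdist, hdegX]
    by_cases h : w = X ∨ w = P
    · rw [if_pos, if_pos h]
      · norm_num
      · rcases h with h | h
        · exact Or.inl h
        · exact Or.inr ((hadjX w).2 h)
    · rw [if_neg, if_neg h]
      intro hc
      rcases hc with hc | hc
      · exact h (Or.inl hc)
      · exact h (Or.inr ((hadjX w).1 hc))
  have hnu : ∀ w, Pdist G P w = if w ∈ NP then (1:ℝ)/12 else 0 := by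
    intro w
    rw [Pdist, hdegP]
    by_cases h : w ∈ NP
    · rw [if_pos, if_pos h]
      · norm_num
      · rcases Finset.mem_insert.1 h with h | h
        · exact Or.inl h
        · exact Or.inr ((hadjP w).2 h)
    · rw [if_neg, if_neg h]
      intro hc
      rcases hc with hc | hc
      · exact h (Finset.mem_insert.2 (Or.inl hc))
      · exact h (Finset.mem_insert.2 (Or.inr ((hadjP w).1 hc)))
  -- distances
  have hreach : ∀ u v : GVert q k, G.Reachable u v :=
    fun u v => ((reach_all q u).symm.trans (reach_all q v))
  have hAdjXP : G.Adj X P := (hadjX P).2 rfl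
  have hdXP : G.dist X P = 1 := SimpleGraph.dist_eq_one_iff_adj.2 hAdjXP
  have hdPv : ∀ v ∈ S, G.dist P v = 1 := fun v hv =>
    SimpleGraph.dist_eq_one_iff_adj.2 ((hadjP v).2 (Finset.mem_of_mem_erase hv))
  have hdX2 : ∀ v, v ≠ X → v ≠ P → 2 ≤ G.dist X v := by
    intro v h1 h2
    have hpos := (hreach X v).pos_dist_of_ne (Ne.symm h1)
    have hne1 : G.dist X v ≠ 1 := fun hc => h2 ((hadjX v).1 (SimpleGraph.dist_eq_one_iff_adj.1 hc))
    omega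
  have hdXv : ∀ v ∈ S, G.dist X v = 2 := by
    intro v hv
    have hvX : v ≠ X := Finset.ne_of_mem_erase hv
    have hvP : v ≠ P := fun h => hPS (h ▸ hv)
    have hle : G.dist X v ≤ 2 := by
      have hAdjPv : G.Adj P v := (hadjP v).2 (Finset.mem_of_mem_erase hv)
      have := SimpleGraph.dist_le (SimpleGraph.Walk.cons hAdjXP
        (SimpleGraph.Walk.cons hAdjPv SimpleGraph.Walk.nil))
      simpa using this
    have := hdX2 v hvX hvP
    omega
  have hdP1 : ∀ v, v ≠ P → 1 ≤ G.dist P v := fun v h =>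
    (hreach P v).pos_dist_of_ne (Ne.symm h)
  -- the EMD
  have hmem : (5/4 : ℝ) ∈ { c : ℝ | ∃ z : GVert q k → GVert q k → ℝ,
      (∀ u v, 0 ≤ z u v) ∧ (∀ u, ∑ᶠ v, z u v = Pdist G X u) ∧
      (∀ v, ∑ᶠ u, z u v = Pdist G P v) ∧
      c = ∑ᶠ u, ∑ᶠ v, gdist G u v * z u v } := by
    classical
    set z : GVert q k → GVert q k → ℝ := fun u v =>
      (if u = X ∧ v = X then (1:ℝ)/12 else 0) +
      (if u = P ∧ v = P then (1:ℝ)/12 else 0) +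
      (if (u = X ∨ u = P) ∧ v ∈ S then (1:ℝ)/24 else 0) with hz
    refine ⟨z, ?_, ?_, ?_, ?_⟩
    · intro u v
      rw [hz]
      have : (0:ℝ) ≤ 1/12 := by norm_num
      have : (0:ℝ) ≤ 1/24 := by norm_num
      dsimp only
      split_ifs <;> norm_num
    · intro u
      rw [finsum_fintype_eq, hmu u]
      by_cases hu1 : u = X
      · subst hu1
        calc ∑ v, z X v
            = ∑ v : GVert q k, ((if v = X then (1:ℝ)/12 else 0) +
                (if v ∈ S then (1:ℝ)/24 else 0)) :=
              Finset.sum_congr rfl (fun v _ => by simp [hz, hXP])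
          _ = 1/12 + (S.card : ℝ) * (1/24) := by
              rw [Finset.sum_add_distrib, Finset.sum_ite_eq' Finset.univ X
                (fun _ => (1:ℝ)/12), Finset.sum_ite_mem, Finset.univ_inter,
                Finset.sum_const]
              rw [if_pos (Finset.mem_univ _), nsmul_eq_mul]
          _ = if (X:GVert q k) = X ∨ X = P then (1:ℝ)/2 else 0 := by
              rw [hScard]; norm_num
      · by_cases hu2 : u = P
        · subst hu2
          calc ∑ v, z P v
              = ∑ v : GVert q k, ((if v = P then (1:ℝ)/12 else 0) +
                  (if v ∈ S then (1:ℝ)/24 else 0)) :=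
                Finset.sum_congr rfl (fun v _ => by simp [hz, Ne.symm hXP])
            _ = 1/12 + (S.card : ℝ) * (1/24) := by
                rw [Finset.sum_add_distrib, Finset.sum_ite_eq' Finset.univ P
                  (fun _ => (1:ℝ)/12), Finset.sum_ite_mem, Finset.univ_inter,
                  Finset.sum_const]
                rw [if_pos (Finset.mem_univ _), nsmul_eq_mul]
            _ = if (P:GVert q k) = X ∨ P = P then (1:ℝ)/2 else 0 := by
                rw [hScard]; norm_num
        · rw [if_neg (fun h => h.elim hu1 hu2)]
          refine Finset.sum_eq_zero fun v _ => by simp [hz, hu1, hu2]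
    · intro v
      rw [finsum_fintype_eq, hnu v]
      by_cases hv1 : v = X
      · subst hv1
        rw [if_pos (Finset.mem_insert_of_mem hXN)]
        calc ∑ u, z u X
            = ∑ u : GVert q k, (if u = X then (1:ℝ)/12 else 0) :=
              Finset.sum_congr rfl (fun u _ => by simp [hz, hXP, Ne.symm hXP, hXS])
          _ = 1/12 := by rw [Finset.sum_ite_eq' Finset.univ X (fun _ => (1:ℝ)/12)]; simp
      · by_cases hv2 : v = P
        · subst hv2
          rw [if_pos (Finset.mem_insert_self _ _)]
          calc ∑ u, z u P
              = ∑ u : GVert q k, (if u = P then (1:ℝ)/12 else 0) :=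
                Finset.sum_congr rfl (fun u _ => by simp [hz, hXP, Ne.symm hXP, hPS])
            _ = 1/12 := by rw [Finset.sum_ite_eq' Finset.univ P (fun _ => (1:ℝ)/12)]; simp
        · by_cases hv3 : v ∈ S
          · rw [if_pos (Finset.mem_insert_of_mem (Finset.mem_of_mem_erase hv3))]
            calc ∑ u, z u v
                = ∑ u : GVert q k, ((if u = X then (1:ℝ)/24 else 0) +
                    (if u = P then (1:ℝ)/24 else 0)) := by
                  refine Finset.sum_congr rfl (fun u _ => ?_)
                  by_cases hu1 : u = X
                  · subst hu1; simp [hz, hv1, hv2, hv3, hXP]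
                  · by_cases hu2 : u = P
                    · subst hu2; simp [hz, hv1, hv2, hv3, Ne.symm hXP]
                    · simp [hz, hu1, hu2]
              _ = 1/12 := by
                  rw [Finset.sum_add_distrib, Finset.sum_ite_eq' Finset.univ X
                    (fun _ => (1:ℝ)/24), Finset.sum_ite_eq' Finset.univ P
                    (fun _ => (1:ℝ)/24)]
                  simp
                  norm_num
          · rw [if_neg (by
              intro h
              rcases Finset.mem_insert.1 h with h | h
              · exact hv2 h
              · exact hv3 (Finset.mem_erase.2 ⟨hv1, h⟩))]
            exact Finset.sum_eq_zero fun u _ => by simp [hz, hv1, hv2, hv3]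
    · simp only [finsum_fintype_eq]
      have hptw : ∀ u v, gdist G u v * z u v =
          if (u = X ∨ u = P) ∧ v ∈ S then gdist G u v * (1/24) else 0 := by
        intro u v
        by_cases h1 : u = X ∧ v = X
        · obtain ⟨rfl, rfl⟩ := h1
          simp [hz, gdist, hXS]
        · by_cases h2 : u = P ∧ v = P
          · obtain ⟨rfl, rfl⟩ := h2
            simp [hz, gdist, hPS]
          · rw [hz]
            dsimp only
            rw [if_neg h1, if_neg h2]
            simp [mul_ite]
      calc (5/4 : ℝ)
          = ∑ u : GVert q k, (if u = X then (20:ℝ)/24 else if u = P then 10/24 else 0) := by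
            have hsplit : ∀ u : GVert q k,
                (if u = X then (20:ℝ)/24 else if u = P then (10:ℝ)/24 else 0)
                  = (if u = X then (20:ℝ)/24 else 0) + (if u = P then (10:ℝ)/24 else 0) := by
              intro u
              by_cases hu1 : u = X
              · subst hu1; simp [hXP]
              · simp [hu1]
            rw [Finset.sum_congr rfl (fun u _ => hsplit u), Finset.sum_add_distrib,
              Finset.sum_ite_eq' Finset.univ X (fun _ => (20:ℝ)/24),
              Finset.sum_ite_eq' Finset.univ P (fun _ => (10:ℝ)/24)]
            simp
            norm_num
          _ = ∑ u : GVert q k, ∑ v : GVert q k, gdist G u v * z u v := by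
            refine Finset.sum_congr rfl (fun u _ => ?_)
            rw [Finset.sum_congr rfl (fun v _ => hptw u v)]
            by_cases hu1 : u = X
            · subst hu1
              rw [if_pos rfl]
              calc (20:ℝ)/24
                  = ∑ v ∈ S, gdist G X v * (1/24) := by
                    rw [Finset.sum_congr rfl (fun v hv => by
                      rw [show gdist G X v = 2 by simp [gdist, hdXv v hv]])]
                    rw [Finset.sum_const, hScard]
                    norm_num
                _ = ∑ v : GVert q k, (if (X = X ∨ X = P) ∧ v ∈ S then gdist G X v * (1/24) else 0) := by
                    simp only [true_or, true_and]
                    rw [Finset.sum_ite_mem, Finset.univ_inter]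
            · by_cases hu2 : u = P
              · subst hu2
                rw [if_neg hu1, if_pos rfl]
                calc (10:ℝ)/24
                    = ∑ v ∈ S, gdist G P v * (1/24) := by
                      rw [Finset.sum_congr rfl (fun v hv => by
                        rw [show gdist G P v = 1 by simp [gdist, hdPv v hv]])]
                      rw [Finset.sum_const, hScard]
                      norm_num
                  _ = ∑ v : GVert q k, (if (P = X ∨ P = P) ∧ v ∈ S then gdist G P v * (1/24) else 0) := by
                      simp only [or_true, true_and]
                      rw [Finset.sum_ite_mem, Finset.univ_inter]
              · rw [if_neg hu1, if_neg hu2]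
                exact (Finset.sum_eq_zero fun v _ => by simp [hu1, hu2]).symm
  have hlb : ∀ c ∈ { c : ℝ | ∃ z : GVert q k → GVert q k → ℝ,
      (∀ u v, 0 ≤ z u v) ∧ (∀ u, ∑ᶠ v, z u v = Pdist G X u) ∧
      (∀ v, ∑ᶠ u, z u v = Pdist G P v) ∧
      c = ∑ᶠ u, ∑ᶠ v, gdist G u v * z u v }, (5/4 : ℝ) ≤ c := by
    rintro c ⟨z, hz0, hrow, hcol, rfl⟩
    simp only [finsum_fintype_eq] at hrow hcol ⊢
    classical
    set f : GVert q k → ℝ := fun v => if v = X then (2:ℝ) else if v = P then 1 else 0 with hf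
    have hf0 : ∀ v, 0 ≤ f v := by
      intro v; rw [hf]; dsimp only; split_ifs <;> norm_num
    have hd0 : ∀ u v : GVert q k, (0:ℝ) ≤ gdist G u v := fun u v => Nat.cast_nonneg _
    have hLip : ∀ u v : GVert q k, f u - f v ≤ gdist G u v := by
      intro u v
      by_cases hu1 : u = X
      · subst hu1
        by_cases hv1 : v = X
        · subst hv1; simpa [hf] using hd0 X X
        · by_cases hv2 : v = P
          · subst hv2
            have hg1 : gdist G X P = 1 := by simp [gdist, hdXP]
            rw [hg1, hf]; dsimp only
            rw [if_pos rfl, if_neg (Ne.symm hXP), if_pos rfl]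
            norm_num
          · have h2 : (2:ℝ) ≤ gdist G X v := by
              have := hdX2 v hv1 hv2
              rw [gdist]; exact_mod_cast this
            rw [hf]; dsimp only
            rw [if_pos rfl, if_neg hv1, if_neg hv2]
            linarith
      · by_cases hu2 : u = P
        · subst hu2
          by_cases hv1 : v = X
          · subst hv1
            rw [hf]; dsimp only
            rw [if_neg (Ne.symm hXP), if_pos rfl, if_pos rfl]
            have := hd0 P X
            linarith
          · by_cases hv2 : v = P
            · subst hv2; simpa [hf, Ne.symm hXP] using hd0 P P
            · have h1 : (1:ℝ) ≤ gdist G P v := by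
                have := hdP1 v hv2
                rw [gdist]; exact_mod_cast this
              rw [hf]; dsimp only
              rw [if_neg (Ne.symm hXP), if_pos rfl, if_neg hv1, if_neg hv2]
              linarith
        · have h1 : f u = 0 := by rw [hf]; dsimp only; rw [if_neg hu1, if_neg hu2]
          have := hf0 v
          have := hd0 u v
          linarith
    have hstep1 : ∑ u : GVert q k, ∑ v : GVert q k, (f u - f v) * z u v
        ≤ ∑ u : GVert q k, ∑ v : GVert q k, gdist G u v * z u v :=
      Finset.sum_le_sum fun u _ => Finset.sum_le_sum fun v _ =>
        mul_le_mul_of_nonneg_right (hLip u v) (hz0 u v)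
    have hstep2 : ∑ u : GVert q k, ∑ v : GVert q k, (f u - f v) * z u v
        = (∑ u : GVert q k, f u * Pdist G X u) - ∑ v : GVert q k, f v * Pdist G P v := by
      have h1 : ∀ u : GVert q k, ∑ v : GVert q k, (f u - f v) * z u v
          = f u * Pdist G X u - ∑ v : GVert q k, f v * z u v := by
        intro u
        rw [← hrow u, Finset.mul_sum, ← Finset.sum_sub_distrib]
        exact Finset.sum_congr rfl fun v _ => by ring
      have h2 : ∑ u : GVert q k, ∑ v : GVert q k, f v * z u v
          = ∑ v : GVert q k, f v * Pdist G P v := by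
        rw [Finset.sum_comm]
        exact Finset.sum_congr rfl fun v _ => by rw [← hcol v, Finset.mul_sum]
      rw [Finset.sum_congr rfl fun u _ => h1 u, Finset.sum_sub_distrib, h2]
    have hval1 : ∑ u : GVert q k, f u * Pdist G X u = 3/2 := by
      have hptw : ∀ u : GVert q k, f u * Pdist G X u
          = (if u = X then (1:ℝ) else 0) + (if u = P then (1:ℝ)/2 else 0) := by
        intro u
        rw [hmu u, hf]
        by_cases hu1 : u = X
        · subst hu1; simp [hXP]
        · by_cases hu2 : u = P
          · subst hu2; simp [Ne.symm hXP]
          · simp [hu1, hu2]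
      rw [Finset.sum_congr rfl fun u _ => hptw u, Finset.sum_add_distrib,
        Finset.sum_ite_eq' Finset.univ X (fun _ => (1:ℝ)),
        Finset.sum_ite_eq' Finset.univ P (fun _ => (1:ℝ)/2)]
      simp
      norm_num
    have hval2 : ∑ v : GVert q k, f v * Pdist G P v = 1/4 := by
      have hptw : ∀ v : GVert q k, f v * Pdist G P v
          = (if v = X then (2:ℝ)/12 else 0) + (if v = P then (1:ℝ)/12 else 0) := by
        intro v
        rw [hnu v, hf]
        by_cases hv1 : v = X
        · subst hv1
          rw [if_pos (Finset.mem_insert_of_mem hXN)]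
          simp [hXP]
          norm_num
        · by_cases hv2 : v = P
          · subst hv2
            rw [if_pos (Finset.mem_insert_self _ _)]
            simp [Ne.symm hXP]
          · simp [hv1, hv2]
      rw [Finset.sum_congr rfl fun v _ => hptw v, Finset.sum_add_distrib,
        Finset.sum_ite_eq' Finset.univ X (fun _ => (2:ℝ)/12),
        Finset.sum_ite_eq' Finset.univ P (fun _ => (1:ℝ)/12)]
      simp
      norm_num
    rw [hval1, hval2] at hstep2
    linarith [hstep1, hstep2]
  rw [EMD]
  exact le_antisymm (csInf_le ⟨5/4, fun c hc => hlb c hc⟩ hmem) (le_csInf ⟨5/4, hmem⟩ hlb)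

lemma leaf_count (k : ℕ) :
    (Finset.univ.filter (fun x : TreeVert k => x.1.length = k)).card = 10 ^ k := by
  classical
  rw [← Fintype.card_subtype]
  have e : {x : TreeVert k // x.1.length = k} ≃ List.Vector (Fin 10) k :=
    { toFun := fun x => ⟨x.1.1, x.2⟩
      invFun := fun v => ⟨⟨v.1, v.2.le⟩, v.2⟩
      left_inv := fun x => rfl
      right_inv := fun v => rfl }
  rw [Fintype.card_congr e, card_vector, Fintype.card_fin]

end LeafProof

/-- In the graph `G_{q,k}` (`q ≥ 1`, `k ≥ 1`), every tree edge of `H₂`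
joining a leaf `r_i` to its parent `r_j` satisfies `EMD(P_{r_i}, P_{r_j}) = 5/4`, i.e.
`C_{G_{q,k}}({r_i,r_j}) = −1/4` (the parent of a leaf has degree 11); consequently the
sum `Λ₃` of the curvatures over all `10^k` leaf edges equals `−10^k/4`. -/
theorem leaf_edges_curvature (q k : ℕ) (hq : 1 ≤ q) (hk : 1 ≤ k) :
    (∀ x : TreeVert k, x.1.length = k →
      degC (Gqk q k) (vTr q k (treeParent x)) = 11 ∧
      EMD (gdist (Gqk q k)) (Pdist (Gqk q k) (vTr q k x))
          (Pdist (Gqk q k) (vTr q k (treeParent x))) = 5 / 4 ∧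
      ricci (Gqk q k) (vTr q k x) (vTr q k (treeParent x)) = -(1 / 4)) ∧
    (∑ x ∈ Finset.univ.filter (fun x : TreeVert k => x.1.length = k),
        ricci (Gqk q k) (vTr q k x) (vTr q k (treeParent x))) = -((10 : ℝ) ^ k) / 4 := by
  have hricci : ∀ x : TreeVert k, x.1.length = k →
      ricci (Gqk q k) (vTr q k x) (vTr q k (treeParent x)) = -(1 / 4) := by
    intro x hx
    rw [ricci, (leaf_core q hk x hx).2]
    norm_num
  constructor
  · intro x hx
    exact ⟨(leaf_core q hk x hx).1, (leaf_core q hk x hx).2, hricci x hx⟩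
  · rw [Finset.sum_congr rfl (fun x hxmem =>
      hricci x (Finset.mem_filter.1 hxmem).2), Finset.sum_const, leaf_count k,
      nsmul_eq_mul]
    push_cast
    ring
end

section
/- In the graph G_{q,k} with q ≥ 1 and k ≥ 2, every tree edge of H_2 joining two non-leaf (internal) vertices r_i and r_j satisfies EMD_{dist}(P_{r_i}, P_{r_j}) = 5/2, i.e., C_{G_{q,k}}({r_i,r_j}) = −3/2 (both endpoints have degree 11 and all cross-neighborhood distances equal 3); in particular C_{G_{q,k}}({r_i,r_j}) ≤ −1/4 for each such edge, and the sum Λ₄ of the curvatures over all internal tree edges satisfies Λ₄ ≤ (−(q + N_k + 2) + q + 3)/10, i.e., Λ₄ ≤ (−N_k + 1)/10. (This establishes the bound Λ₄ ≤ (−n + √n + 3)/10 asserted in claim (v) of the proof of the paper's Theorem 1, with n = q + N_k + 2.) -/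
namespace InternalAux
open SimpleGraph Finset

def chV (q k : ℕ) (y : TreeVert k) (hy : y.1.length < k) (a : Fin 10) : GVert q k :=
  vTr q k ⟨a :: y.1, by simpa [List.length_cons, Nat.succ_le_iff] using hy⟩

def paV (q k : ℕ) (y : TreeVert k) : GVert q k :=
  if y.1 = [] then vT q k else vTr q k (treeParent y)

lemma vTr_inj {q k : ℕ} {a b : TreeVert k} (h : vTr q k a = vTr q k b) : a = b := by
  simpa [vTr] using h

lemma chV_injective {q k : ℕ} (y : TreeVert k) (hy : y.1.length < k) :
    Function.Injective (chV q k y hy) := by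
  intro a b h
  have := vTr_inj h
  have : a :: y.1 = b :: y.1 := congrArg Subtype.val this
  simpa using this

lemma paV_ne_chV {q k : ℕ} (y : TreeVert k) (hy : y.1.length < k) (a : Fin 10) :
    paV q k y ≠ chV q k y hy a := by
  by_cases h : y.1 = []
  · rw [paV, if_pos h]; simp [vT, chV, vTr]
  · rw [paV, if_neg h]
    intro hc
    have h3 := congrArg List.length (congrArg Subtype.val (vTr_inj hc))
    have hlen : 0 < y.1.length := List.length_pos_iff.mpr h
    simp [treeParent, List.length_tail, chV] at h3

lemma self_ne_chV {q k : ℕ} (y : TreeVert k) (hy : y.1.length < k) (a : Fin 10) :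
    vTr q k y ≠ chV q k y hy a := by
  intro hc
  have h3 := congrArg List.length (congrArg Subtype.val (vTr_inj hc))
  simp at h3

lemma self_ne_paV {q k : ℕ} (y : TreeVert k) :
    vTr q k y ≠ paV q k y := by
  by_cases h : y.1 = []
  · rw [paV, if_pos h]; simp [vT, vTr]
  · rw [paV, if_neg h]
    intro hc
    have h3 := congrArg List.length (congrArg Subtype.val (vTr_inj hc))
    have hlen : 0 < y.1.length := List.length_pos_iff.mpr h
    simp [treeParent, List.length_tail] at h3
    omega

lemma adj_iff {q k : ℕ} (y : TreeVert k) (hy : y.1.length < k) (w : GVert q k) :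
    (Gqk q k).Adj (vTr q k y) w ↔ w = paV q k y ∨ ∃ a : Fin 10, w = chV q k y hy a := by
  rw [Gqk, SimpleGraph.fromRel_adj]
  constructor
  · rintro ⟨hne, h | h⟩
    · rcases h with ⟨h1, -⟩ | ⟨i, h1, -⟩ | ⟨h1, -⟩ | ⟨u, v, h1, h2, a, h3⟩
      · exact absurd h1 (by simp [vTr, vS])
      · exact absurd h1 (by simp [vTr, vP])
      · exact absurd h1 (by simp [vTr, vT])
      · have hu : u = y := vTr_inj h1.symm
        rw [hu] at h3
        left
        have hne' : y.1 ≠ [] := by rw [h3]; simp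
        have hv : v = treeParent y := by
          apply Subtype.ext
          show v.1 = y.1.tail
          rw [h3]
          rfl
        rw [paV, if_neg hne', h2, hv]
    · rcases h with ⟨-, h2⟩ | ⟨i, -, h2 | h2⟩ | ⟨h1, h2⟩ | ⟨u, v, h1, h2, a, h3⟩
      · exact absurd h2 (by simp [vTr, vT])
      · exact absurd h2 (by simp [vTr, vS])
      · exact absurd h2 (by simp [vTr, vT])
      · left
        have hy' : y = treeRoot k := vTr_inj h2
        have hroot : y.1 = [] := by rw [hy']; rfl
        rw [paV, if_pos hroot, h1]
      · have hv : v = y := (vTr_inj h2).symm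
        rw [hv] at h3
        right
        refine ⟨a, ?_⟩
        rw [h1]
        unfold chV vTr
        congr 1
        exact Subtype.ext h3
  · rintro (rfl | ⟨a, rfl⟩)
    · by_cases hr : y.1 = []
      · rw [paV, if_pos hr]
        have hy' : y = treeRoot k := Subtype.ext hr
        refine ⟨by simp [vTr, vT], Or.inr ?_⟩
        exact Or.inr (Or.inr (Or.inl ⟨rfl, by rw [hy']⟩))
      · rw [paV, if_neg hr]
        have hlen : 0 < y.1.length := List.length_pos_iff.mpr hr
        refine ⟨?_, Or.inl ?_⟩
        · intro hc
          have h3 := congrArg List.length (congrArg Subtype.val (vTr_inj hc))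
          simp [treeParent, List.length_tail] at h3
          omega
        · exact Or.inr (Or.inr (Or.inr ⟨y, treeParent y, rfl, rfl,
            y.1.head hr, by simp [treeParent, List.cons_head_tail]⟩))
    · refine ⟨(self_ne_chV y hy a), Or.inr ?_⟩
      exact Or.inr (Or.inr (Or.inr ⟨⟨a :: y.1, by
        simpa [List.length_cons, Nat.succ_le_iff] using hy⟩, y, rfl, rfl, a, rfl⟩))

def nfin (q k : ℕ) (y : TreeVert k) (hy : y.1.length < k) : Finset (GVert q k) :=
  insert (paV q k y) (Finset.image (chV q k y hy) Finset.univ)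

lemma adj_iff_mem {q k : ℕ} (y : TreeVert k) (hy : y.1.length < k) (w : GVert q k) :
    (Gqk q k).Adj (vTr q k y) w ↔ w ∈ nfin q k y hy := by
  rw [adj_iff y hy w]
  simp [nfin, eq_comm]

lemma card_nfin {q k : ℕ} (y : TreeVert k) (hy : y.1.length < k) :
    (nfin q k y hy).card = 11 := by
  rw [nfin, Finset.card_insert_of_notMem, Finset.card_image_of_injective _ (chV_injective y hy)]
  · simp
  · simp only [Finset.mem_image, not_exists]
    rintro a ⟨-, hc⟩
    exact paV_ne_chV y hy a hc.symm

lemma degC_eq {q k : ℕ} (y : TreeVert k) (hy : y.1.length < k) :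
    degC (Gqk q k) (vTr q k y) = 11 := by
  have hset : {w | (Gqk q k).Adj (vTr q k y) w} = ↑(nfin q k y hy) := by
    ext w; simpa using adj_iff_mem y hy w
  rw [degC, hset, Nat.card_coe_set_eq, Set.ncard_coe_finset, card_nfin]

lemma self_not_mem_nfin {q k : ℕ} (y : TreeVert k) (hy : y.1.length < k) :
    vTr q k y ∉ nfin q k y hy := by
  rw [← adj_iff_mem y hy]
  simp

lemma pdist_eq {q k : ℕ} (y : TreeVert k) (hy : y.1.length < k) :
    Pdist (Gqk q k) (vTr q k y)
      = fun w => if w ∈ insert (vTr q k y) (nfin q k y hy) then (12:ℝ)⁻¹ else 0 := by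
  funext w
  rw [Pdist, degC_eq y hy]
  have h12 : ((11:ℕ):ℝ) + 1 = 12 := by norm_num
  rw [h12]
  congr 1
  simp only [Finset.mem_insert, eq_iff_iff]
  rw [← adj_iff_mem y hy]


lemma adj_t_root (q k : ℕ) : (Gqk q k).Adj (vT q k) (vTr q k (treeRoot k)) := by
  rw [Gqk, SimpleGraph.fromRel_adj]
  exact ⟨by simp [vT, vTr], Or.inl (Or.inr (Or.inr (Or.inl ⟨rfl, rfl⟩)))⟩

lemma adj_cons (q k : ℕ) (a : Fin 10) (l : List (Fin 10)) (h : (a :: l).length ≤ k) :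
    (Gqk q k).Adj (vTr q k ⟨a :: l, h⟩) (vTr q k ⟨l, by simp at h; omega⟩) := by
  rw [Gqk, SimpleGraph.fromRel_adj]
  refine ⟨?_, Or.inl (Or.inr (Or.inr (Or.inr ⟨_, _, rfl, rfl, a, rfl⟩)))⟩
  intro hc
  have h3 := congrArg List.length (congrArg Subtype.val (vTr_inj hc))
  simp at h3

lemma reach_tree (q k : ℕ) : ∀ (l : List (Fin 10)) (h : l.length ≤ k),
    (Gqk q k).Reachable (vTr q k ⟨l, h⟩) (vT q k)
  | [], h => by
      have : (⟨[], h⟩ : TreeVert k) = treeRoot k := rfl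
      rw [this]
      exact (adj_t_root q k).symm.reachable
  | (a :: l), h => by
      refine SimpleGraph.Reachable.trans (adj_cons q k a l h).reachable ?_
      exact reach_tree q k l (by simp at h; omega)

lemma gqk_connected (q k : ℕ) : (Gqk q k).Connected := by
  have hT : ∀ w : GVert q k, (Gqk q k).Reachable w (vT q k) := by
    rintro ((i | i) | x)
    · fin_cases i
      · refine SimpleGraph.Adj.reachable ?_
        rw [Gqk, SimpleGraph.fromRel_adj]
        exact ⟨by simp [vS, vT], Or.inl (Or.inl ⟨rfl, rfl⟩)⟩
      · exact SimpleGraph.Reachable.refl _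
    · refine SimpleGraph.Adj.reachable ?_
      rw [Gqk, SimpleGraph.fromRel_adj]
      exact ⟨by simp [vP, vT], Or.inl (Or.inr (Or.inl ⟨i, rfl, Or.inr rfl⟩))⟩
    · exact reach_tree q k x.1 x.2
  exact SimpleGraph.Connected.mk (fun a b => (hT a).trans (hT b).symm)

lemma lip_walk {V : Type} {G : SimpleGraph V} (f : V → ℝ)
    (hf : ∀ a b, G.Adj a b → f a - f b ≤ 1) :
    ∀ {a b : V} (p : G.Walk a b), f a - f b ≤ p.length := by
  intro a b p
  induction p with
  | nil => simp
  | @cons u c w h p ih =>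
      have h1 := hf _ _ h
      rw [SimpleGraph.Walk.length_cons]
      push_cast
      linarith

lemma lip_dist {V : Type} {G : SimpleGraph V} (hc : G.Connected) (f : V → ℝ)
    (hf : ∀ a b, G.Adj a b → f a - f b ≤ 1) (a b : V) : f a - f b ≤ (G.dist a b : ℝ) := by
  obtain ⟨p, hp⟩ := (hc a b).exists_walk_length_eq_dist
  calc f a - f b ≤ p.length := lip_walk f hf p
  _ = _ := by rw [hp]

/-- capped distance to the set of children of the vertex with address `L`. -/
def gpot (q k : ℕ) (L : List (Fin 10)) : GVert q k → ℕ := fun w =>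
  match w with
  | Sum.inl _ => 3
  | Sum.inr l =>
      if L <:+ l.1 then
        (if l.1.length ≤ L.length then 1 else min 3 (l.1.length - L.length - 1))
      else (if l.1 = L.tail then 2 else 3)

lemma gpot_edge {q k : ℕ} (L : List (Fin 10)) (hL : L ≠ []) (a b : GVert q k)
    (hab : (Gqk q k).Adj a b) :
    gpot q k L a ≤ gpot q k L b + 1 ∧ gpot q k L b ≤ gpot q k L a + 1 := by
  have key : ∀ c d : GVert q k, gadjBase q k c d →
      gpot q k L c ≤ gpot q k L d + 1 ∧ gpot q k L d ≤ gpot q k L c + 1 := by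
    rintro c d (⟨rfl, rfl⟩ | ⟨i, rfl, rfl | rfl⟩ | ⟨rfl, rfl⟩ | ⟨u, v, rfl, rfl, e, h3⟩)
    · simp [gpot, vS, vT]
    · simp [gpot, vP, vS]
    · simp [gpot, vP, vT]
    · -- t -- root
      have hnil : ¬ (L <:+ ([] : List (Fin 10))) := by
        rw [List.suffix_nil]; exact hL
      simp only [gpot, vT, vTr, treeRoot]
      rw [if_neg hnil]
      split_ifs <;> omega
    · -- tree edge: u.1 = e :: v.1
      simp only [gpot, vTr]
      rw [h3]
      by_cases h1 : L <:+ v.1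
      · have h2 : L <:+ e :: v.1 := h1.trans (List.suffix_cons e v.1)
        have hle : L.length ≤ v.1.length := h1.length_le
        rw [if_pos h1, if_pos h2]
        simp only [List.length_cons]
        split_ifs <;> omega
      · by_cases h2 : L <:+ e :: v.1
        · have hLe : L = e :: v.1 := by
            rcases List.suffix_cons_iff.mp h2 with h | h
            · exact h
            · exact absurd h h1
          have htl : v.1 = L.tail := by rw [hLe]; rfl
          rw [if_neg h1, if_pos h2, if_pos htl,
            if_pos (le_of_eq (by rw [hLe]) : (e :: v.1).length ≤ L.length)]
          omega
        · rw [if_neg h1, if_neg h2]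
          by_cases hA : e :: v.1 = L.tail
          · have hB : ¬ (v.1 = L.tail) := by
              intro hB
              have := hA.trans hB.symm
              have := congrArg List.length this
              simp at this
            rw [if_pos hA, if_neg hB]
            omega
          · rw [if_neg hA]
            split_ifs <;> omega
  rw [Gqk, SimpleGraph.fromRel_adj] at hab
  rcases hab.2 with h | h
  · exact key a b h
  · exact (key b a h).symm


lemma parent_len_lt {k : ℕ} (x : TreeVert k) (hlt : x.1.length < k) :
    (treeParent x).1.length < k := by
  show x.1.tail.length < k
  rw [List.length_tail]; omega

lemma not_suffix_tail {α : Type} [DecidableEq α] (L : List α) (hne : L ≠ []) : ¬ (L <:+ L.tail) := by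
  intro h
  have h1 := h.length_le
  have h2 : 0 < L.length := List.length_pos_iff.mpr hne
  rw [List.length_tail] at h1
  omega

lemma gpot_self {q k : ℕ} (x : TreeVert k) : gpot q k x.1 (vTr q k x) = 1 := by
  simp [gpot, vTr, List.suffix_refl]

lemma gpot_child {q k : ℕ} (x : TreeVert k) (hlt : x.1.length < k) (a : Fin 10) :
    gpot q k x.1 (chV q k x hlt a) = 0 := by
  simp only [gpot, chV, vTr]
  rw [if_pos (List.suffix_cons a x.1), if_neg (by simp)]
  simp

lemma gpot_parent {q k : ℕ} (x : TreeVert k) (hne : x.1 ≠ []) :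
    gpot q k x.1 (vTr q k (treeParent x)) = 2 := by
  simp only [gpot, vTr, treeParent]
  rw [if_neg (not_suffix_tail x.1 hne)]
  simp

lemma gpot_grand {q k : ℕ} (x : TreeVert k) (hne : x.1 ≠ []) :
    gpot q k x.1 (paV q k (treeParent x)) = 3 := by
  have hx : 0 < x.1.length := List.length_pos_iff.mpr hne
  by_cases h : (treeParent x).1 = []
  · rw [paV, if_pos h]; simp [gpot, vT]
  · rw [paV, if_neg h]
    have htl : 0 < x.1.tail.length := List.length_pos_iff.mpr h
    simp only [gpot, vTr, treeParent]
    rw [if_neg, if_neg]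
    · intro hc
      have := congrArg List.length hc
      simp only [List.length_tail] at this htl
      omega
    · intro hc
      have := hc.length_le
      simp only [List.length_tail] at this htl
      omega

lemma gpot_sibling {q k : ℕ} (x : TreeVert k) (hne : x.1 ≠ []) (hlt : x.1.length < k)
    (a : Fin 10) (ha : a ≠ x.1.head hne) :
    gpot q k x.1 (chV q k (treeParent x) (parent_len_lt x hlt) a) = 3 := by
  have hx : 0 < x.1.length := List.length_pos_iff.mpr hne
  simp only [gpot, chV, vTr, treeParent]
  rw [if_neg, if_neg]
  · intro hc
    have := congrArg List.length hc
    rw [List.length_cons, List.length_tail] at this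
    omega
  · intro hc
    rcases List.suffix_cons_iff.mp hc with h | h
    · have hx2 : x.1.head hne :: x.1.tail = x.1 := List.cons_head_tail hne
      have h2 : x.1.head hne :: x.1.tail = a :: x.1.tail := hx2.trans h
      injection h2 with h1 _
      exact ha h1.symm
    · exact not_suffix_tail x.1 hne h

def tgmap (q k : ℕ) (x : TreeVert k) (hne : x.1 ≠ []) (hlt : x.1.length < k) (a : Fin 10) :
    GVert q k :=
  if a = x.1.head hne then paV q k (treeParent x)
  else chV q k (treeParent x) (parent_len_lt x hlt) a



def Tmap (q k : ℕ) (x : TreeVert k) (hne : x.1 ≠ []) (hlt : x.1.length < k) :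
    GVert q k → GVert q k := fun w =>
  Sum.elim (fun z => Sum.inl z)
    (fun l : TreeVert k => if h : l.1 ≠ [] ∧ l.1.tail = x.1 then tgmap q k x hne hlt (l.1.head h.1)
      else Sum.inr l) w

lemma paV_x_eq {q k : ℕ} (x : TreeVert k) (hne : x.1 ≠ []) :
    paV q k x = vTr q k (treeParent x) := by rw [paV, if_neg hne]

def vecToTree {k : ℕ} (hk : 2 ≤ k) (w : List.Vector (Fin 10) (k-1)) : TreeVert k :=
  ⟨w.1, by rw [w.2]; omega⟩

variable {q k : ℕ} (x : TreeVert k) (hne : x.1 ≠ []) (hlt : x.1.length < k)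

lemma chV_head_eq : chV q k (treeParent x) (parent_len_lt x hlt) (x.1.head hne) = vTr q k x := by
  unfold chV vTr
  congr 1
  exact Subtype.ext (List.cons_head_tail hne)

lemma tg_inj : Function.Injective (tgmap q k x hne hlt) := by
  intro a b h
  unfold tgmap at h
  split_ifs at h with h1 h2 h2
  · rw [h1, h2]
  · exact absurd h (paV_ne_chV _ _ _)
  · exact absurd h.symm (paV_ne_chV _ _ _)
  · exact chV_injective _ _ h

lemma tg_ne_x (a : Fin 10) : tgmap q k x hne hlt a ≠ vTr q k x := by
  rw [← chV_head_eq x hne hlt]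
  unfold tgmap
  split_ifs with h1
  · exact paV_ne_chV _ _ _
  · intro hc
    exact h1 (chV_injective _ _ hc)

lemma tg_ne_v (a : Fin 10) : tgmap q k x hne hlt a ≠ vTr q k (treeParent x) := by
  unfold tgmap
  split_ifs with h1
  · exact (self_ne_paV _).symm
  · exact (self_ne_chV _ _ _).symm

lemma tg_mem (a : Fin 10) :
    tgmap q k x hne hlt a ∈ nfin q k (treeParent x) (parent_len_lt x hlt) := by
  unfold tgmap nfin
  split_ifs with h1
  · exact Finset.mem_insert_self _ _
  · exact Finset.mem_insert_of_mem (Finset.mem_image_of_mem _ (Finset.mem_univ a))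

lemma Tmap_inr (l : TreeVert k) : Tmap q k x hne hlt (Sum.inr l)
    = if h : l.1 ≠ [] ∧ l.1.tail = x.1 then tgmap q k x hne hlt (l.1.head h.1)
      else Sum.inr l := rfl

lemma Tmap_child (a : Fin 10) :
    Tmap q k x hne hlt (chV q k x hlt a) = tgmap q k x hne hlt a := by
  show Tmap q k x hne hlt (Sum.inr (⟨a :: x.1, _⟩ : TreeVert k)) = _
  exact (Tmap_inr x hne hlt _).trans (dif_pos ⟨List.cons_ne_nil _ _, rfl⟩)

lemma Tmap_x : Tmap q k x hne hlt (vTr q k x) = vTr q k x := by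
  show Tmap q k x hne hlt (Sum.inr x) = Sum.inr x
  rw [Tmap_inr, dif_neg]
  rintro ⟨h1, h2⟩
  have := congrArg List.length h2
  rw [List.length_tail] at this
  have := List.length_pos_iff.mpr hne
  omega

lemma Tmap_v : Tmap q k x hne hlt (vTr q k (treeParent x)) = vTr q k (treeParent x) := by
  show Tmap q k x hne hlt (Sum.inr (treeParent x)) = Sum.inr (treeParent x)
  rw [Tmap_inr, dif_neg]
  rintro ⟨h1, h2⟩
  have h3 := congrArg List.length h2
  have h4 : 0 < (treeParent x).1.length := List.length_pos_iff.mpr h1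
  have h5 : (treeParent x).1.length = x.1.length - 1 := List.length_tail (l := x.1)
  rw [List.length_tail] at h3
  omega

lemma Tmap_fix (w : GVert q k) (hw : ∀ a : Fin 10, w ≠ chV q k x hlt a) :
    Tmap q k x hne hlt w = w := by
  match w with
  | Sum.inl z => rfl
  | Sum.inr l =>
    rw [Tmap_inr, dif_neg]
    rintro ⟨h1, h2⟩
    refine hw (l.1.head h1) ?_
    unfold chV vTr
    congr 1
    apply Subtype.ext
    show l.1 = l.1.head h1 :: x.1
    rw [← h2, List.cons_head_tail]

lemma key_x (h : GVert q k → ℝ) :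
    ∑ w : GVert q k, (if w ∈ insert (vTr q k x) (nfin q k x hlt) then h w else 0)
      = h (vTr q k x) + (h (paV q k x) + ∑ a : Fin 10, h (chV q k x hlt a)) := by
  rw [Finset.sum_ite_mem, Finset.univ_inter,
    Finset.sum_insert (self_not_mem_nfin x hlt)]
  rw [nfin, Finset.sum_insert (by
    simp only [Finset.mem_image, not_exists, not_and]
    intro a _ hc
    exact paV_ne_chV x hlt a hc.symm)]
  rw [Finset.sum_image (fun a _ b _ hab => chV_injective x hlt hab)]


lemma tg_head : tgmap q k x hne hlt (x.1.head hne) = paV q k (treeParent x) := by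
  unfold tgmap; rw [if_pos rfl]

lemma tg_other (a : Fin 10) (ha : a ≠ x.1.head hne) :
    tgmap q k x hne hlt a = chV q k (treeParent x) (parent_len_lt x hlt) a := by
  unfold tgmap; rw [if_neg ha]

lemma emd_52 {q k : ℕ} (x : TreeVert k) (hne : x.1 ≠ []) (hlt : x.1.length < k) :
    EMD (gdist (Gqk q k)) (Pdist (Gqk q k) (vTr q k x))
      (Pdist (Gqk q k) (vTr q k (treeParent x))) = 5 / 2 := by
  have hpl := parent_len_lt x hlt
  have hμ := pdist_eq (q := q) x hlt
  have hν := pdist_eq (q := q) (treeParent x) hpl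
  have hP0 : ∀ w, 0 ≤ Pdist (Gqk q k) (vTr q k x) w := by
    intro w; rw [hμ]; dsimp only; split_ifs <;> norm_num
  -- the generic weighted-sum identities
  have hkey : ∀ h : GVert q k → ℝ, ∑ w : GVert q k, Pdist (Gqk q k) (vTr q k x) w * h w
      = 12⁻¹ * h (vTr q k x) + (12⁻¹ * h (vTr q k (treeParent x))
        + ∑ a : Fin 10, 12⁻¹ * h (chV q k x hlt a)) := by
    intro h
    have hk := key_x x hlt (fun w => (12:ℝ)⁻¹ * h w)
    rw [paV_x_eq x hne] at hk
    rw [← hk]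
    apply Finset.sum_congr rfl
    intro w _
    rw [hμ]
    dsimp only
    split_ifs <;> simp
  have hkeyv : ∀ h : GVert q k → ℝ,
      ∑ w : GVert q k, Pdist (Gqk q k) (vTr q k (treeParent x)) w * h w
      = 12⁻¹ * h (vTr q k (treeParent x)) + (12⁻¹ * h (paV q k (treeParent x))
        + ∑ a : Fin 10, 12⁻¹ * h (chV q k (treeParent x) hpl a)) := by
    intro h
    have hk := key_x (treeParent x) hpl (fun w => (12:ℝ)⁻¹ * h w)
    rw [← hk]
    apply Finset.sum_congr rfl
    intro w _
    rw [hν]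
    dsimp only
    split_ifs <;> simp
  -- values of the potential
  have ha0 : chV q k (treeParent x) hpl (x.1.head hne) = vTr q k x := chV_head_eq x hne hlt
  have hvx : vTr q k x ≠ vTr q k (treeParent x) := by
    rw [← paV_x_eq x hne]; exact self_ne_paV x
  -- row marginals of the explicit plan
  have hrow : ∀ w, ∑ᶠ b, (Pdist (Gqk q k) (vTr q k x) w
      * (if Tmap q k x hne hlt w = b then (1:ℝ) else 0)) = Pdist (Gqk q k) (vTr q k x) w := by
    intro w
    rw [finsum_eq_sum_of_fintype]
    simp [mul_ite, Finset.sum_ite_eq]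
  -- column marginals of the explicit plan
  have hcol : ∀ b, ∑ᶠ w, (Pdist (Gqk q k) (vTr q k x) w
      * (if Tmap q k x hne hlt w = b then (1:ℝ) else 0))
      = Pdist (Gqk q k) (vTr q k (treeParent x)) b := by
    intro b
    rw [finsum_eq_sum_of_fintype]
    have H := hkey (fun w => if Tmap q k x hne hlt w = b then (1:ℝ) else 0)
    simp only [Tmap_x x hne hlt, Tmap_v x hne hlt, Tmap_child x hne hlt] at H
    rw [H, hν]
    dsimp only
    by_cases hb1 : ∃ a, tgmap q k x hne hlt a = b
    · obtain ⟨a1, rfl⟩ := hb1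
      rw [if_neg (Ne.symm (tg_ne_x x hne hlt a1)), if_neg (Ne.symm (tg_ne_v x hne hlt a1)),
        if_pos (Finset.mem_insert_of_mem (tg_mem x hne hlt a1)),
        Finset.sum_eq_single a1 (fun a _ ha => by
          rw [if_neg (fun hc => ha (tg_inj x hne hlt hc)), mul_zero])
          (fun hc => absurd (Finset.mem_univ a1) hc),
        if_pos rfl]
      norm_num
    · by_cases hb2 : b = vTr q k x
      · subst hb2
        rw [if_pos rfl, if_neg (fun hc : vTr q k (treeParent x) = vTr q k x => hvx hc.symm),
          Finset.sum_eq_zero (fun a _ => by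
            rw [if_neg (fun hc => hb1 ⟨a, hc⟩), mul_zero]),
          if_pos (by
            refine Finset.mem_insert_of_mem ?_
            rw [nfin]
            exact Finset.mem_insert_of_mem (by
              rw [← ha0]; exact Finset.mem_image_of_mem _ (Finset.mem_univ _)))]
        norm_num
      · by_cases hb3 : b = vTr q k (treeParent x)
        · subst hb3
          rw [if_neg hvx, if_pos rfl,
            Finset.sum_eq_zero (fun a _ => by
              rw [if_neg (fun hc => hb1 ⟨a, hc⟩), mul_zero]),
            if_pos (Finset.mem_insert_self _ _)]
          norm_num
        · rw [if_neg (fun hc : vTr q k x = b => hb2 hc.symm),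
            if_neg (fun hc : vTr q k (treeParent x) = b => hb3 hc.symm),
            Finset.sum_eq_zero (fun a _ => by
              rw [if_neg (fun hc => hb1 ⟨a, hc⟩), mul_zero]),
            if_neg (by
              intro hmem
              rcases Finset.mem_insert.mp hmem with h | h
              · exact hb3 h
              · rw [nfin] at h
                rcases Finset.mem_insert.mp h with h | h
                · exact hb1 ⟨x.1.head hne, (tg_head x hne hlt).trans h.symm⟩
                · obtain ⟨a, -, rfl⟩ := Finset.mem_image.mp h
                  by_cases hah : a = x.1.head hne
                  · subst hah; exact hb2 ha0
                  · exact hb1 ⟨a, tg_other x hne hlt a hah⟩)]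
          norm_num
  -- nonnegativity of the plan
  have hz0 : ∀ w b, 0 ≤ Pdist (Gqk q k) (vTr q k x) w
      * (if Tmap q k x hne hlt w = b then (1:ℝ) else 0) := by
    intro w b
    apply mul_nonneg (hP0 w)
    split_ifs <;> norm_num
  -- distance upper bounds for the plan
  have hdistself : ∀ w : GVert q k, gdist (Gqk q k) w w = 0 := by
    intro w; simp [gdist, SimpleGraph.dist_self]
  have hdist3 : ∀ a : Fin 10,
      gdist (Gqk q k) (chV q k x hlt a) (tgmap q k x hne hlt a) ≤ 3 := by
    intro a
    have hadj1 : (Gqk q k).Adj (vTr q k x) (chV q k x hlt a) :=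
      (adj_iff x hlt _).mpr (Or.inr ⟨a, rfl⟩)
    have hadj2 : (Gqk q k).Adj (vTr q k x) (vTr q k (treeParent x)) :=
      (adj_iff x hlt _).mpr (Or.inl (paV_x_eq x hne).symm)
    have hadj3 : (Gqk q k).Adj (vTr q k (treeParent x)) (tgmap q k x hne hlt a) := by
      refine (adj_iff (treeParent x) hpl _).mpr ?_
      unfold tgmap
      split_ifs
      · exact Or.inl rfl
      · exact Or.inr ⟨a, rfl⟩
    have hd := SimpleGraph.dist_le
      (SimpleGraph.Walk.cons hadj1.symm (SimpleGraph.Walk.cons hadj2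
        (SimpleGraph.Walk.cons hadj3 SimpleGraph.Walk.nil)))
    simp only [SimpleGraph.Walk.length_cons, SimpleGraph.Walk.length_nil] at hd
    show ((Gqk q k).dist _ _ : ℝ) ≤ 3
    exact_mod_cast hd
  -- cost of the explicit plan
  have hub : (∑ᶠ u, ∑ᶠ b, gdist (Gqk q k) u b * (Pdist (Gqk q k) (vTr q k x) u
      * (if Tmap q k x hne hlt u = b then (1:ℝ) else 0))) ≤ 5 / 2 := by
    simp only [finsum_eq_sum_of_fintype]
    have e : ∀ u, ∑ b : GVert q k, gdist (Gqk q k) u b * (Pdist (Gqk q k) (vTr q k x) u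
        * (if Tmap q k x hne hlt u = b then (1:ℝ) else 0))
        = Pdist (Gqk q k) (vTr q k x) u * gdist (Gqk q k) u (Tmap q k x hne hlt u) := by
      intro u
      simp [mul_ite, Finset.sum_ite_eq, mul_comm]
    rw [Finset.sum_congr rfl (fun u _ => e u),
      hkey (fun u => gdist (Gqk q k) u (Tmap q k x hne hlt u)),
      Tmap_x x hne hlt, Tmap_v x hne hlt, hdistself, hdistself]
    have hsum : ∑ a : Fin 10, 12⁻¹ * gdist (Gqk q k) (chV q k x hlt a)
        (Tmap q k x hne hlt (chV q k x hlt a)) ≤ ∑ _a : Fin 10, (12:ℝ)⁻¹ * 3 := by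
      apply Finset.sum_le_sum
      intro a _
      rw [Tmap_child x hne hlt]
      exact mul_le_mul_of_nonneg_left (hdist3 a) (by norm_num)
    simp only [Finset.sum_const, Finset.card_univ, Fintype.card_fin, nsmul_eq_mul] at hsum
    norm_num at hsum ⊢
    linarith
  -- the dual lower bound
  have hlb : ∀ z : GVert q k → GVert q k → ℝ, (∀ u v, 0 ≤ z u v) →
      (∀ u, ∑ᶠ v, z u v = Pdist (Gqk q k) (vTr q k x) u) →
      (∀ v, ∑ᶠ u, z u v = Pdist (Gqk q k) (vTr q k (treeParent x)) v) →
      5 / 2 ≤ ∑ᶠ u, ∑ᶠ v, gdist (Gqk q k) u v * z u v := by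
    intro z hznn hrowz hcolz
    simp only [finsum_eq_sum_of_fintype] at hrowz hcolz ⊢
    set f : GVert q k → ℝ := fun w => -((gpot q k x.1 w : ℝ)) with hf
    have hlip : ∀ a b, (Gqk q k).Adj a b → f a - f b ≤ 1 := by
      intro a b hab
      have h2 := (gpot_edge x.1 hne a b hab).2
      have h3 : ((gpot q k x.1 b : ℝ)) ≤ (gpot q k x.1 a : ℝ) + 1 := by exact_mod_cast h2
      simp only [hf]
      linarith
    have hfd : ∀ a b, f a - f b ≤ gdist (Gqk q k) a b :=
      fun a b => lip_dist (gqk_connected q k) f hlip a b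
    have step1 : ∑ u : GVert q k, ∑ b : GVert q k, (f u - f b) * z u b
        ≤ ∑ u : GVert q k, ∑ b : GVert q k, gdist (Gqk q k) u b * z u b :=
      Finset.sum_le_sum (fun u _ => Finset.sum_le_sum (fun b _ =>
        mul_le_mul_of_nonneg_right (hfd u b) (hznn u b)))
    have step2 : ∑ u : GVert q k, ∑ b : GVert q k, (f u - f b) * z u b
        = (∑ u : GVert q k, f u * Pdist (Gqk q k) (vTr q k x) u)
          - ∑ b : GVert q k, f b * Pdist (Gqk q k) (vTr q k (treeParent x)) b := by
      have e1 : ∀ u, ∑ b : GVert q k, (f u - f b) * z u b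
          = f u * Pdist (Gqk q k) (vTr q k x) u - ∑ b : GVert q k, f b * z u b := by
        intro u
        calc ∑ b : GVert q k, (f u - f b) * z u b
            = ∑ b : GVert q k, (f u * z u b - f b * z u b) := by
              apply Finset.sum_congr rfl; intros; ring
          _ = (∑ b : GVert q k, f u * z u b) - ∑ b : GVert q k, f b * z u b :=
              Finset.sum_sub_distrib _ _
          _ = f u * Pdist (Gqk q k) (vTr q k x) u - ∑ b : GVert q k, f b * z u b := by
              rw [← Finset.mul_sum, hrowz u]
      rw [Finset.sum_congr rfl (fun u _ => e1 u), Finset.sum_sub_distrib]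
      congr 1
      rw [Finset.sum_comm]
      apply Finset.sum_congr rfl
      intro b _
      rw [← Finset.mul_sum, hcolz b]
    have hval1 : f (vTr q k x) = -1 := by
      simp only [hf]; rw [gpot_self]; norm_num
    have hval2 : f (vTr q k (treeParent x)) = -2 := by
      simp only [hf]; rw [gpot_parent x hne]; norm_num
    have hval3 : ∀ a, f (chV q k x hlt a) = 0 := by
      intro a; simp only [hf]; rw [gpot_child x hlt a]; norm_num
    have hval4 : f (paV q k (treeParent x)) = -3 := by
      simp only [hf]; rw [gpot_grand x hne]; norm_num
    have hval5 : ∀ a, a ≠ x.1.head hne → f (chV q k (treeParent x) hpl a) = -3 := by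
      intro a ha; simp only [hf]; rw [gpot_sibling x hne hlt a ha]; norm_num
    have hμf : ∑ u : GVert q k, f u * Pdist (Gqk q k) (vTr q k x) u = -(1/4) := by
      rw [Finset.sum_congr rfl (fun u _ => mul_comm (f u) (Pdist (Gqk q k) (vTr q k x) u)),
        hkey f, hval1, hval2, Finset.sum_congr rfl (fun a _ => by rw [hval3 a])]
      simp
      norm_num
    have hνf : ∑ b : GVert q k, f b * Pdist (Gqk q k) (vTr q k (treeParent x)) b
        = -(33/12) := by
      rw [Finset.sum_congr rfl
          (fun u _ => mul_comm (f u) (Pdist (Gqk q k) (vTr q k (treeParent x)) u)),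
        hkeyv f, hval2, hval4]
      have hsplit : ∑ a : Fin 10, 12⁻¹ * f (chV q k (treeParent x) hpl a) = -(28/12) := by
        rw [← Finset.add_sum_erase _ _ (Finset.mem_univ (x.1.head hne)), ha0, hval1,
          Finset.sum_congr rfl (fun a ha => by
            rw [hval5 a (Finset.ne_of_mem_erase ha)]),
          Finset.sum_const, Finset.card_erase_of_mem (Finset.mem_univ _)]
        simp
        norm_num
      rw [hsplit]
      norm_num
    rw [step2, hμf, hνf] at step1
    linarith
  -- put everything together
  rw [EMD]
  apply le_antisymm
  · refine le_trans (csInf_le ⟨5/2, fun c hc => ?_⟩ (Set.mem_setOf.mpr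
      ⟨fun u b => Pdist (Gqk q k) (vTr q k x) u
        * (if Tmap q k x hne hlt u = b then (1:ℝ) else 0), hz0, hrow, hcol, rfl⟩)) hub
    obtain ⟨zf, h1, h2, h3, rfl⟩ := hc
    exact hlb zf h1 h2 h3
  · refine le_csInf ⟨_, Set.mem_setOf.mpr
      ⟨fun u b => Pdist (Gqk q k) (vTr q k x) u
        * (if Tmap q k x hne hlt u = b then (1:ℝ) else 0), hz0, hrow, hcol, rfl⟩⟩ ?_
    rintro c ⟨zf, h1, h2, h3, rfl⟩
    exact hlb zf h1 h2 h3

end InternalAux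

/-- In the graph `G_{q,k}` with `q ≥ 1` and `k ≥ 2`, every tree edge of
`H₂` joining two non-leaf (internal) vertices `r_i` and `r_j` satisfies
`EMD(P_{r_i}, P_{r_j}) = 5/2`, i.e. `C_{G_{q,k}}({r_i,r_j}) = −3/2` (both endpoints have
degree 11); in particular `C_{G_{q,k}}({r_i,r_j}) ≤ −1/4` for each such edge, and the sum
`Λ₄` of the curvatures over all internal tree edges satisfies `Λ₄ ≤ (−N_k + 1)/10`. -/
theorem internal_edges_curvature (q k : ℕ) (hq : 1 ≤ q) (hk : 2 ≤ k) :
    (∀ x : TreeVert k, x.1 ≠ [] → x.1.length < k →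
      degC (Gqk q k) (vTr q k x) = 11 ∧
      degC (Gqk q k) (vTr q k (treeParent x)) = 11 ∧
      EMD (gdist (Gqk q k)) (Pdist (Gqk q k) (vTr q k x))
          (Pdist (Gqk q k) (vTr q k (treeParent x))) = 5 / 2 ∧
      ricci (Gqk q k) (vTr q k x) (vTr q k (treeParent x)) = -(3 / 2) ∧
      ricci (Gqk q k) (vTr q k x) (vTr q k (treeParent x)) ≤ -(1 / 4)) ∧
    (∑ x ∈ Finset.univ.filter (fun x : TreeVert k => x.1 ≠ [] ∧ x.1.length < k),
        ricci (Gqk q k) (vTr q k x) (vTr q k (treeParent x))) ≤ (-(Nk k : ℝ) + 1) / 10 := by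
  have hpart1 : ∀ x : TreeVert k, x.1 ≠ [] → x.1.length < k →
      degC (Gqk q k) (vTr q k x) = 11 ∧
      degC (Gqk q k) (vTr q k (treeParent x)) = 11 ∧
      EMD (gdist (Gqk q k)) (Pdist (Gqk q k) (vTr q k x))
          (Pdist (Gqk q k) (vTr q k (treeParent x))) = 5 / 2 ∧
      ricci (Gqk q k) (vTr q k x) (vTr q k (treeParent x)) = -(3 / 2) ∧
      ricci (Gqk q k) (vTr q k x) (vTr q k (treeParent x)) ≤ -(1 / 4) := by
    intro x hne hlt
    have hpl := InternalAux.parent_len_lt x hlt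
    refine ⟨InternalAux.degC_eq x hlt, InternalAux.degC_eq (treeParent x) hpl,
      InternalAux.emd_52 x hne hlt, ?_, ?_⟩
    · rw [ricci, InternalAux.emd_52 x hne hlt]; norm_num
    · rw [ricci, InternalAux.emd_52 x hne hlt]; norm_num
  refine ⟨hpart1, ?_⟩
  have hterm : ∀ x ∈ Finset.univ.filter (fun x : TreeVert k => x.1 ≠ [] ∧ x.1.length < k),
      ricci (Gqk q k) (vTr q k x) (vTr q k (treeParent x)) = -(3/2 : ℝ) := by
    intro x hx
    obtain ⟨h1, h2⟩ := (Finset.mem_filter.mp hx).2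
    exact (hpart1 x h1 h2).2.2.2.1
  rw [Finset.sum_congr rfl hterm, Finset.sum_const, nsmul_eq_mul]
  have hcard : (10:ℕ)^(k-1)
      ≤ (Finset.univ.filter (fun x : TreeVert k => x.1 ≠ [] ∧ x.1.length < k)).card := by
    have hle : (Finset.univ : Finset (List.Vector (Fin 10) (k-1))).card
        ≤ (Finset.univ.filter (fun x : TreeVert k => x.1 ≠ [] ∧ x.1.length < k)).card := by
      apply Finset.card_le_card_of_injOn (InternalAux.vecToTree (k := k) hk)
      · intro w _
        refine Finset.mem_coe.mpr (Finset.mem_filter.mpr ?_)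
        refine ⟨Finset.mem_univ _, ?_, ?_⟩
        · show w.1 ≠ []
          intro hc
          have h2 := w.2
          rw [hc] at h2
          simp at h2
          omega
        · show w.1.length < k
          rw [w.2]; omega
      · intro a _ b _ h
        apply Subtype.ext
        exact congrArg (fun t : TreeVert k => t.1) h
    rwa [Finset.card_univ, card_vector, Fintype.card_fin] at hle
  have hNk : Nk k ≤ 15 * 10^(k-1) := by
    have h10 : (10:ℕ)^(k+1) = 100 * 10^(k-1) := by
      rw [show k+1 = (k-1)+2 by omega, pow_add]; ring
    have h1 : (10:ℕ)^(k+1) - 1 ≤ 9 * (15 * 10^(k-1)) := by omega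
    calc Nk k = (10^(k+1)-1)/9 := rfl
      _ ≤ (9 * (15*10^(k-1)))/9 := Nat.div_le_div_right h1
      _ = 15*10^(k-1) := Nat.mul_div_cancel_left _ (by norm_num)
  have hc' : ((10:ℝ))^(k-1) ≤
      ((Finset.univ.filter (fun x : TreeVert k => x.1 ≠ [] ∧ x.1.length < k)).card : ℝ) := by
    exact_mod_cast hcard
  have hN' : ((Nk k : ℝ)) ≤ 15 * 10^(k-1) := by exact_mod_cast hNk
  linarith
end
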